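/- arXiv:1910.10248 — 6 statements merged into one kernel-verified Lean document; each statement's English description precedes it below -/
import Mathlib

section
/- Let K be a C¹-smooth convex body in the hyperbolic plane ℍ that is symmetric about a point p in its interior and has constant width w > 0. Then K is a disc; more precisely, K = Metric.closedBall p (w/2). -/
open scoped UpperHalfPlane
open Set Metric

/-- A unit-speed parametrization of a geodesic line in `ℍ`. -/
def IsGeodesicParam (γ : ℝ → ℍ) : Prop := ∀ s t : ℝ, dist (γ s) (γ t) = |s - t|

/-- A geodesic line in `ℍ`. -/
def IsGeodesicLine (Γ : Set ℍ) : Prop := ∃ γ : ℝ → ℍ, IsGeodesicParam γ ∧ Γ = Set.range γ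

/-- The geodesic segment `[x,y]` in `ℍ`. -/
def Seg (x y : ℍ) : Set ℍ := {z : ℍ | dist x z + dist z y = dist x y}

/-- Hyperbolic convexity: with any two points, `K` contains the geodesic segment joining them. -/
def HypConvex (K : Set ℍ) : Prop := ∀ ⦃x⦄, x ∈ K → ∀ ⦃y⦄, y ∈ K → Seg x y ⊆ K

/-- A convex body: compact, convex, with nonempty interior. -/
def IsConvexBody (K : Set ℍ) : Prop := IsCompact K ∧ HypConvex K ∧ (interior K).Nonempty

/-- The orthogonal projection of `K` onto a geodesic line `Γ`. -/
def Proj (Γ K : Set ℍ) : Set ℍ :=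
  {p : ℍ | p ∈ Γ ∧ ∃ k ∈ K, dist k p = Metric.infDist k Γ}

/-- `Γ` is normal to `K` at the frontier point `x`: `x` is an endpoint of the projection. -/
def IsNormalAt (K Γ : Set ℍ) (x : ℍ) : Prop :=
  x ∈ frontier K ∧ ∃ γ : ℝ → ℍ, IsGeodesicParam γ ∧ Γ = Set.range γ ∧
    ∃ s : ℝ, γ s = x ∧ (Proj Γ K ⊆ γ '' Set.Ici s ∨ Proj Γ K ⊆ γ '' Set.Iic s)

/-- `Γ` is a double normal of `K`. -/
def IsDoubleNormal (K Γ : Set ℍ) : Prop := (K ∩ Γ).Nonempty ∧ Proj Γ K = K ∩ Γ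

/-- `K` has constant width `w > 0`. -/
def HasConstantWidth (K : Set ℍ) (w : ℝ) : Prop :=
  0 < w ∧
  (∀ x ∈ frontier K, ∃ Γ : Set ℍ, IsGeodesicLine Γ ∧ IsNormalAt K Γ x) ∧
  ∀ Γ : Set ℍ, IsGeodesicLine Γ → (∃ x, IsNormalAt K Γ x) →
    IsDoubleNormal K Γ ∧ Metric.diam (K ∩ Γ) = w

/-- `K` is symmetric about `p`. -/
def SymmetricAbout (K : Set ℍ) (p : ℍ) : Prop :=
  ∀ x ∈ K, ∀ y : ℍ, dist x p = dist p y → dist x y = dist x p + dist p y → y ∈ K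

/-- `K` is `C¹`-smooth: its frontier, viewed in `ℂ`, is the image of a periodic `C¹`
map with nowhere-vanishing derivative, injective on a period. -/
def IsC1Smooth (K : Set ℍ) : Prop :=
  ∃ (r : ℝ → ℂ) (T : ℝ), 0 < T ∧ Function.Periodic r T ∧ ContDiff ℝ 1 r ∧
    (∀ t : ℝ, deriv r t ≠ 0) ∧ Set.InjOn r (Set.Ico 0 T) ∧
    (fun z : ℍ => (z : ℂ)) '' frontier K = Set.range r

/-! ### Auxiliary material on geodesics in `ℍ`

We construct explicit unit-speed geodesics (vertical lines and semicircles) through any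
two points of `ℍ`, together with the key "cosh of distance" estimate: for such a geodesic
`γ` and any point `k`, `cosh (dist k (γ t)) = C * cosh (t - u)` for some `C ≥ 1` and `u`. -/

/-- A geodesic parametrization having the cosh-distance property. -/
def DiscNiceGeo (γ : ℝ → ℍ) : Prop :=
  ∀ k : ℍ, ∃ C u : ℝ, 1 ≤ C ∧ ∀ t : ℝ, Real.cosh (dist k (γ t)) = C * Real.cosh (t - u)

lemma DiscNiceGeo.param {γ : ℝ → ℍ} (h : DiscNiceGeo γ) : IsGeodesicParam γ := by
  intro s t
  obtain ⟨C, u, hC, hcosh⟩ := h (γ s)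
  have h0 := hcosh s
  rw [dist_self, Real.cosh_zero] at h0
  have hcs : Real.cosh (s - u) ≤ 1 := by
    nlinarith [Real.one_le_cosh (s - u), Real.cosh_pos (s - u)]
  have hsu : s = u := by
    have h2 : Real.cosh (s - u) ≤ Real.cosh 0 := by rwa [Real.cosh_zero]
    have h3 := Real.cosh_le_cosh.mp h2
    simp only [abs_zero] at h3
    have := abs_eq_zero.mp (le_antisymm h3 (abs_nonneg _))
    linarith
  have hC1 : C = 1 := by rw [← hsu, sub_self, Real.cosh_zero, mul_one] at h0; linarith
  have h4 : Real.cosh (dist (γ s) (γ t)) = Real.cosh (t - s) := by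
    rw [hcosh t, hC1, one_mul, ← hsu]
  have h5 : |dist (γ s) (γ t)| = |t - s| :=
    le_antisymm (Real.cosh_le_cosh.mp h4.le) (Real.cosh_le_cosh.mp h4.ge)
  rw [abs_of_nonneg dist_nonneg] at h5
  rw [h5, abs_sub_comm]

lemma IsGeodesicParam.cont {γ : ℝ → ℍ} (h : IsGeodesicParam γ) : Continuous γ := by
  have : LipschitzWith 1 γ := LipschitzWith.of_dist_le_mul (fun s t => by
    rw [h s t, Real.dist_eq]; simp)
  exact this.continuous

lemma disc_cosh_dist (z w : ℍ) :
    Real.cosh (dist z w) = 1 + ((z.re - w.re)^2 + (z.im - w.im)^2) / (2 * z.im * w.im) := by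
  rw [UpperHalfPlane.cosh_dist, Complex.dist_eq_re_im, Real.sq_sqrt (by positivity)]
  simp only [UpperHalfPlane.coe_re, UpperHalfPlane.coe_im]

lemma disc_rep (A B : ℝ) (hA : 0 < A) (h1 : 1 ≤ A^2 - B^2) :
    ∃ C u : ℝ, 1 ≤ C ∧ ∀ t : ℝ, A * Real.cosh t - B * Real.sinh t = C * Real.cosh (t - u) := by
  have hpos : (0:ℝ) < A^2 - B^2 := by linarith
  set C := Real.sqrt (A^2 - B^2) with hCdef
  have hC2 : C^2 = A^2 - B^2 := Real.sq_sqrt hpos.le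
  have hC1 : 1 ≤ C := by
    rw [hCdef, show (1:ℝ) = Real.sqrt 1 by simp]
    exact Real.sqrt_le_sqrt h1
  have hC0 : 0 < C := by linarith
  refine ⟨C, Real.arsinh (B / C), hC1, fun t => ?_⟩
  have hsinh : Real.sinh (Real.arsinh (B/C)) = B / C := Real.sinh_arsinh _
  have hcosh : Real.cosh (Real.arsinh (B/C)) = A / C := by
    rw [Real.cosh_arsinh, show 1 + (B/C)^2 = (A/C)^2 by field_simp; linarith]
    exact Real.sqrt_sq (by positivity)
  rw [Real.cosh_sub, hsinh, hcosh]
  field_simp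

/-- The vertical geodesic above `x0`. -/
noncomputable def discVertGeo (x0 : ℝ) : ℝ → ℍ :=
  fun t => UpperHalfPlane.mk ⟨x0, Real.exp t⟩ (Real.exp_pos t)

@[simp] lemma discVertGeo_re (x0 t : ℝ) : (discVertGeo x0 t).re = x0 := rfl
@[simp] lemma discVertGeo_im (x0 t : ℝ) : (discVertGeo x0 t).im = Real.exp t := rfl

/-- The semicircular geodesic with center `c` (on the real axis) and radius `r`. -/
noncomputable def discCircGeo (c r : ℝ) (hr : 0 < r) : ℝ → ℍ :=
  fun t => UpperHalfPlane.mk ⟨c + r * Real.tanh t, r / Real.cosh t⟩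
    (div_pos hr (Real.cosh_pos t))

@[simp] lemma discCircGeo_re (c r : ℝ) (hr : 0 < r) (t : ℝ) :
    (discCircGeo c r hr t).re = c + r * Real.tanh t := rfl
@[simp] lemma discCircGeo_im (c r : ℝ) (hr : 0 < r) (t : ℝ) :
    (discCircGeo c r hr t).im = r / Real.cosh t := rfl

lemma discNiceGeo_of_AB {γ : ℝ → ℍ}
    (h : ∀ k : ℍ, ∃ A B : ℝ, 0 < A ∧ 1 ≤ A^2 - B^2 ∧
      ∀ t : ℝ, Real.cosh (dist k (γ t)) = A * Real.cosh t - B * Real.sinh t) :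
    DiscNiceGeo γ := by
  intro k
  obtain ⟨A, B, hA, h1, hf⟩ := h k
  obtain ⟨C, u, hC, hrep⟩ := disc_rep A B hA h1
  exact ⟨C, u, hC, fun t => by rw [hf t, hrep t]⟩

lemma discNiceGeo_vert (x0 : ℝ) : DiscNiceGeo (discVertGeo x0) := by
  apply discNiceGeo_of_AB
  intro k
  have hb : 0 < k.im := k.im_pos
  set a := k.re with ha
  set b := k.im with hbd
  have hqb : b^2 ≤ (a - x0)^2 + b^2 := by nlinarith [sq_nonneg (a - x0)]
  have hq0 : (0:ℝ) < (a - x0)^2 + b^2 := by nlinarith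
  refine ⟨((a - x0)^2 + b^2+1)/(2*b), ((a - x0)^2 + b^2-1)/(2*b), by positivity, ?_, ?_⟩
  · have hkey : (((a - x0)^2 + b^2+1)/(2*b))^2 - (((a - x0)^2 + b^2-1)/(2*b))^2
        = ((a - x0)^2 + b^2) / b^2 := by
      field_simp
      ring
    rw [hkey, le_div_iff₀ (by positivity : (0:ℝ) < b^2)]
    linarith
  · intro t
    rw [disc_cosh_dist]
    simp only [discVertGeo_re, discVertGeo_im]
    rw [Real.cosh_eq, Real.sinh_eq, Real.exp_neg]
    have hE : 0 < Real.exp t := Real.exp_pos t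
    field_simp
    ring

lemma discNiceGeo_circ (c r : ℝ) (hr : 0 < r) : DiscNiceGeo (discCircGeo c r hr) := by
  apply discNiceGeo_of_AB
  intro k
  have hb : 0 < k.im := k.im_pos
  set a := k.re with ha
  set b := k.im with hbd
  refine ⟨((a-c)^2 + b^2 + r^2)/(2*b*r), (a-c)/b, ?_, ?_, ?_⟩
  · exact div_pos (by nlinarith [sq_nonneg (a-c), pow_pos hb 2, pow_pos hr 2]) (by positivity)
  · have hkey : (((a-c)^2 + b^2 + r^2)/(2*b*r))^2 - ((a-c)/b)^2
        = 1 + (((a-c)^2 + b^2 - r^2)/(2*b*r))^2 := by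
      field_simp
      ring
    rw [hkey]
    nlinarith [sq_nonneg (((a-c)^2 + b^2 - r^2)/(2*b*r))]
  · intro t
    rw [disc_cosh_dist]
    simp only [discCircGeo_re, discCircGeo_im]
    have hch : 0 < Real.cosh t := Real.cosh_pos t
    have hch2 : Real.cosh t ^ 2 = Real.sinh t ^ 2 + 1 := Real.cosh_sq t
    rw [Real.tanh_eq_sinh_div_cosh, ← ha, ← hbd]
    field_simp
    linear_combination (-r^2) * hch2

lemma disc_reparam_through {γ0 : ℝ → ℍ} (h : DiscNiceGeo γ0) {a b : ℍ} {sa sb : ℝ}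
    (ha : γ0 sa = a) (hb : γ0 sb = b) :
    ∃ γ : ℝ → ℍ, DiscNiceGeo γ ∧ γ 0 = a ∧ γ (dist a b) = b := by
  have hd : dist a b = |sa - sb| := by rw [← ha, ← hb]; exact h.param sa sb
  rcases le_total sa sb with hle | hle
  · refine ⟨fun t => γ0 (t + sa), ?_, by simpa, ?_⟩
    · intro k
      obtain ⟨C, u, hC, hc⟩ := h k
      refine ⟨C, u - sa, hC, fun t => ?_⟩
      have he : t + sa - u = t - (u - sa) := by ring
      rw [hc (t + sa), he]
    · rw [hd, abs_of_nonpos (by linarith)]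
      show γ0 (-(sa - sb) + sa) = b
      rw [show -(sa - sb) + sa = sb by ring, hb]
  · refine ⟨fun t => γ0 (-t + sa), ?_, by simpa, ?_⟩
    · intro k
      obtain ⟨C, u, hC, hc⟩ := h k
      refine ⟨C, -(u - sa), hC, fun t => ?_⟩
      have he : -t + sa - u = -(t - -(u - sa)) := by ring
      rw [hc (-t + sa), he, Real.cosh_neg]
    · rw [hd, abs_of_nonneg (by linarith)]
      show γ0 (-(sa - sb) + sa) = b
      rw [show -(sa - sb) + sa = sb by ring, hb]

lemma discCircGeo_through (c r : ℝ) (hr : 0 < r) (z : ℍ)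
    (hz : (z.re - c)^2 + z.im^2 = r^2) :
    discCircGeo c r hr (Real.arsinh ((z.re - c)/z.im)) = z := by
  have hb : 0 < z.im := z.im_pos
  have hcosh : Real.cosh (Real.arsinh ((z.re - c)/z.im)) = r / z.im := by
    rw [Real.cosh_arsinh, show 1 + ((z.re - c)/z.im)^2 = (r/z.im)^2 by
      field_simp; linarith]
    exact Real.sqrt_sq (by positivity)
  apply UpperHalfPlane.ext'
  · rw [discCircGeo_re, Real.tanh_eq_sinh_div_cosh, Real.sinh_arsinh, hcosh]
    field_simp
    ring
  · rw [discCircGeo_im, hcosh]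
    field_simp

/-- Through any two points of `ℍ` there is a nice unit-speed geodesic. -/
lemma disc_exists_nice (a b : ℍ) :
    ∃ γ : ℝ → ℍ, DiscNiceGeo γ ∧ γ 0 = a ∧ γ (dist a b) = b := by
  by_cases hre : a.re = b.re
  · have key : ∀ z : ℍ, z.re = a.re → discVertGeo a.re (Real.log z.im) = z := by
      intro z hz
      apply UpperHalfPlane.ext'
      · rw [discVertGeo_re, hz]
      · rw [discVertGeo_im, Real.exp_log z.im_pos]
    exact disc_reparam_through (discNiceGeo_vert a.re) (key a rfl) (key b hre.symm)
  · obtain ⟨c, hc⟩ : ∃ c : ℝ, c = (a.re^2 + a.im^2 - b.re^2 - b.im^2) / (2*(a.re - b.re)) :=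
      ⟨_, rfl⟩
    have hne : a.re - b.re ≠ 0 := sub_ne_zero.mpr hre
    have hcc : 2*c*(a.re - b.re) = a.re^2 + a.im^2 - b.re^2 - b.im^2 := by
      rw [hc]; field_simp
    obtain ⟨r, hrdef⟩ : ∃ r : ℝ, r = Real.sqrt ((a.re - c)^2 + a.im^2) := ⟨_, rfl⟩
    have hsum : (0:ℝ) < (a.re - c)^2 + a.im^2 := by
      nlinarith [sq_nonneg (a.re - c), pow_pos a.im_pos 2]
    have hr : 0 < r := hrdef ▸ Real.sqrt_pos.mpr hsum
    have hr2 : (a.re - c)^2 + a.im^2 = r^2 := by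
      rw [hrdef]; exact (Real.sq_sqrt hsum.le).symm
    have hb2 : (b.re - c)^2 + b.im^2 = r^2 := by
      rw [← hr2]; linear_combination hcc
    exact disc_reparam_through (discNiceGeo_circ c r hr)
      (discCircGeo_through c r hr a hr2) (discCircGeo_through c r hr b hb2)

/-- Uniqueness of the nearest-point projection onto a nice geodesic. -/
lemma disc_proj_unique {γ : ℝ → ℍ} {k : ℍ} {C u : ℝ} (hC : 1 ≤ C)
    (hcosh : ∀ t, Real.cosh (dist k (γ t)) = C * Real.cosh (t - u)) {v : ℝ}
    (hv : dist k (γ v) = Metric.infDist k (Set.range γ)) : v = u := by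
  have h1 : Metric.infDist k (Set.range γ) ≤ dist k (γ u) :=
    Metric.infDist_le_dist_of_mem ⟨u, rfl⟩
  have h2 : Real.cosh (dist k (γ v)) ≤ Real.cosh (dist k (γ u)) := by
    rw [Real.cosh_le_cosh, abs_of_nonneg dist_nonneg, abs_of_nonneg dist_nonneg]
    exact hv.le.trans h1
  rw [hcosh v, hcosh u, sub_self, Real.cosh_zero, mul_one] at h2
  have hC0 : 0 < C := by linarith
  have h3 : Real.cosh (v - u) ≤ Real.cosh 0 := by
    rw [Real.cosh_zero]
    nlinarith
  have h4 := Real.cosh_le_cosh.mp h3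
  simp only [abs_zero] at h4
  have := abs_eq_zero.mp (le_antisymm h4 (abs_nonneg _))
  linarith

/-- **Theorem 4.1.** A `C¹`-smooth convex body in `ℍ` which is symmetric about an interior
point `p` and has constant width `w > 0` is the disc of radius `w/2` centered at `p`. -/
theorem symmetric_constantWidth_is_disc (K : Set ℍ) (p : ℍ) (w : ℝ)
    (hK : IsConvexBody K) (hsm : IsC1Smooth K)
    (hp : p ∈ interior K) (hsym : SymmetricAbout K p)
    (hcw : HasConstantWidth K w) :
    K = Metric.closedBall p (w / 2) := by
  obtain ⟨hcomp, hconv, -⟩ := hK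
  obtain ⟨hw, hex, hdn⟩ := hcw
  have hKcl : IsClosed K := hcomp.isClosed
  have hpK : p ∈ K := interior_subset hp
  have hfrK : frontier K ⊆ K := by
    rw [hKcl.frontier_eq]; exact diff_subset
  -- Part 1 : every point of `K` is within distance `w/2` of `p`.
  have part1 : ∀ k ∈ K, dist p k ≤ w / 2 := by
    obtain ⟨x₀, hx₀K, hmax'⟩ := hcomp.exists_isMaxOn ⟨p, hpK⟩
      (continuous_const.dist continuous_id).continuousOn
    have hmax : ∀ k ∈ K, dist p k ≤ dist p x₀ := fun k hk => hmax' hk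
    set R := dist p x₀ with hR
    suffices hRw : R ≤ w / 2 by
      intro k hk; exact (hmax k hk).trans hRw
    obtain ⟨γ, hγ, hγ0, hγR⟩ := disc_exists_nice p x₀
    rw [← hR] at hγR
    have hparam := hγ.param
    have hR0 : 0 < R := by
      rcases eq_or_lt_of_le (dist_nonneg.trans_eq hR.symm : (0:ℝ) ≤ R) with h0 | h0
      · exfalso
        have hKp : ∀ k ∈ K, k = p := by
          intro k hk
          have h1 := hmax k hk
          rw [← h0] at h1
          have h2 := le_antisymm h1 dist_nonneg
          rw [dist_eq_zero] at h2
          exact h2.symm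
        obtain ⟨ε, hε, hball⟩ := Metric.isOpen_iff.mp isOpen_interior p hp
        have hqK : γ (ε/2) ∈ K := by
          apply interior_subset; apply hball
          rw [Metric.mem_ball]
          have hd := hparam (ε/2) 0
          rw [hγ0] at hd
          rw [hd, sub_zero, abs_of_nonneg (by linarith)]
          linarith
        have heq := hKp _ hqK
        have hd2 := hparam (ε/2) 0
        rw [hγ0, heq, dist_self, eq_comm, abs_eq_zero, sub_zero] at hd2
        linarith
      · exact h0
    have hx₀F : x₀ ∈ frontier K := by
      rw [hKcl.frontier_eq]
      refine ⟨hx₀K, fun hint => ?_⟩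
      obtain ⟨ε, hε, hball⟩ := Metric.isOpen_iff.mp isOpen_interior x₀ hint
      have hmem : γ (R + ε/2) ∈ K := by
        apply interior_subset; apply hball
        rw [Metric.mem_ball]
        have hd := hparam (R + ε/2) R
        rw [hγR] at hd
        rw [hd, show R + ε/2 - R = ε/2 by ring, abs_of_nonneg (by linarith)]
        linarith
      have h1 := hmax _ hmem
      have h2 : dist p (γ (R + ε/2)) = R + ε/2 := by
        have hd := hparam 0 (R + ε/2)
        rw [hγ0] at hd
        rw [hd, abs_of_nonpos (by linarith)]
        ring
      rw [h2] at h1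
      linarith
    have hline : IsGeodesicLine (Set.range γ) := ⟨γ, hparam, rfl⟩
    have hnormal : IsNormalAt K (Set.range γ) x₀ := by
      refine ⟨hx₀F, γ, hparam, rfl, R, hγR, Or.inr ?_⟩
      rintro q ⟨⟨v, hv⟩, k, hkK, hdq⟩
      obtain ⟨C, u, hC, hcosh⟩ := hγ k
      have hvu : v = u := disc_proj_unique hC hcosh (by rw [hv]; exact hdq)
      have h1 : Real.cosh (dist k (γ 0)) = C * Real.cosh (0 - u) := hcosh 0
      have h2 : Real.cosh u ≤ Real.cosh (dist k (γ 0)) := by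
        rw [h1, zero_sub, Real.cosh_neg]
        nlinarith [Real.cosh_pos u]
      have h3 := Real.cosh_le_cosh.mp h2
      rw [abs_of_nonneg dist_nonneg, hγ0] at h3
      have hu : |u| ≤ R := by
        calc |u| ≤ dist k p := h3
          _ = dist p k := dist_comm k p
          _ ≤ R := hmax k hkK
      refine ⟨u, ?_, by rw [← hv, hvu]⟩
      rw [Set.mem_Iic]
      linarith [(abs_le.mp hu).2]
    obtain ⟨-, hdiam⟩ := hdn (Set.range γ) hline ⟨x₀, hnormal⟩
    have hd1 : dist p (γ (-R)) = R := by
      have hd := hparam 0 (-R)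
      rw [hγ0] at hd
      rw [hd, show (0:ℝ) - -R = R by ring, abs_of_nonneg hR0.le]
    have hd2 : dist x₀ (γ (-R)) = 2*R := by
      have hd := hparam R (-R)
      rw [hγR] at hd
      rw [hd, show R - -R = 2*R by ring, abs_of_nonneg (by linarith)]
    have hyK : γ (-R) ∈ K := by
      apply hsym x₀ hx₀K
      · rw [dist_comm, hd1]
      · rw [hd2, dist_comm x₀ p, hd1, ← hR]; ring
    have hxm : x₀ ∈ K ∩ Set.range γ := ⟨hx₀K, R, hγR⟩
    have hym : γ (-R) ∈ K ∩ Set.range γ := ⟨hyK, -R, rfl⟩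
    have hbd : Bornology.IsBounded (K ∩ Set.range γ) :=
      hcomp.isBounded.subset Set.inter_subset_left
    have h2R := Metric.dist_le_diam_of_mem hbd hxm hym
    rw [hd2, hdiam] at h2R
    linarith
  -- Part 2 : every frontier point of `K` is at distance at least `w/2` from `p`.
  have part2 : ∀ x ∈ frontier K, w / 2 ≤ dist p x := by
    intro x hxF
    obtain ⟨Γ, hΓline, hnor⟩ := hex x hxF
    obtain ⟨⟨hne, hproj⟩, hdiam⟩ := hdn Γ hΓline ⟨x, hnor⟩
    obtain ⟨-, γ, hγp, hrange, s, hγs, hside⟩ := hnor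
    have key : Metric.diam (K ∩ Γ) ≤ dist p x + w/2 := by
      apply Metric.diam_le_of_forall_dist_le (by linarith [dist_nonneg (x := p) (y := x)])
      intro y hy z hz
      have hy' : y ∈ Proj Γ K := by rw [hproj]; exact hy
      have hz' : z ∈ Proj Γ K := by rw [hproj]; exact hz
      have hpy : dist p y ≤ w/2 := part1 y hy.1
      have hpz : dist p z ≤ w/2 := part1 z hz.1
      rcases hside with hs | hs
      · obtain ⟨t1, ht1, hty⟩ := hs hy'
        obtain ⟨t2, ht2, htz⟩ := hs hz'
        rw [Set.mem_Ici] at ht1 ht2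
        have hdyz : dist y z = |t1 - t2| := by rw [← hty, ← htz]; exact hγp t1 t2
        have hdxy : dist x y = t1 - s := by
          rw [← hγs, ← hty, hγp s t1, abs_of_nonpos (by linarith)]; ring
        have hdxz : dist x z = t2 - s := by
          rw [← hγs, ← htz, hγp s t2, abs_of_nonpos (by linarith)]; ring
        rcases le_total t1 t2 with h | h
        · calc dist y z = t2 - t1 := by rw [hdyz, abs_of_nonpos (by linarith)]; ring
            _ ≤ t2 - s := by linarith
            _ = dist x z := hdxz.symm
            _ ≤ dist x p + dist p z := dist_triangle x p z
            _ ≤ dist p x + w/2 := by rw [dist_comm x p]; linarith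
        · calc dist y z = t1 - t2 := by rw [hdyz, abs_of_nonneg (by linarith)]
            _ ≤ t1 - s := by linarith
            _ = dist x y := hdxy.symm
            _ ≤ dist x p + dist p y := dist_triangle x p y
            _ ≤ dist p x + w/2 := by rw [dist_comm x p]; linarith
      · obtain ⟨t1, ht1, hty⟩ := hs hy'
        obtain ⟨t2, ht2, htz⟩ := hs hz'
        rw [Set.mem_Iic] at ht1 ht2
        have hdyz : dist y z = |t1 - t2| := by rw [← hty, ← htz]; exact hγp t1 t2
        have hdxy : dist x y = s - t1 := by
          rw [← hγs, ← hty, hγp s t1, abs_of_nonneg (by linarith)]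
        have hdxz : dist x z = s - t2 := by
          rw [← hγs, ← htz, hγp s t2, abs_of_nonneg (by linarith)]
        rcases le_total t1 t2 with h | h
        · calc dist y z = t2 - t1 := by rw [hdyz, abs_of_nonpos (by linarith)]; ring
            _ ≤ s - t1 := by linarith
            _ = dist x y := hdxy.symm
            _ ≤ dist x p + dist p y := dist_triangle x p y
            _ ≤ dist p x + w/2 := by rw [dist_comm x p]; linarith
        · calc dist y z = t1 - t2 := by rw [hdyz, abs_of_nonneg (by linarith)]
            _ ≤ s - t2 := by linarith
            _ = dist x z := hdxz.symm
            _ ≤ dist x p + dist p z := dist_triangle x p z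
            _ ≤ dist p x + w/2 := by rw [dist_comm x p]; linarith
    rw [hdiam] at key
    linarith
  -- Conclusion.
  apply Set.Subset.antisymm
  · intro x hxK
    rw [Metric.mem_closedBall, dist_comm]
    exact part1 x hxK
  · intro z hz
    rw [Metric.mem_closedBall] at hz
    by_contra hzK
    have hdpos : 0 < dist p z := by
      rcases eq_or_lt_of_le (dist_nonneg : (0:ℝ) ≤ dist p z) with h0 | h0
      · exfalso
        apply hzK
        rw [eq_comm, dist_eq_zero] at h0
        rw [← h0]; exact hpK
      · exact h0
    obtain ⟨γ, hγ, hγ0, hγd⟩ := disc_exists_nice p z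
    have hparam := hγ.param
    set d := dist p z with hdd
    have hdw : d ≤ w/2 := by rw [hdd, dist_comm]; exact hz
    set B := {t : ℝ | γ t ∈ K} ∩ Set.Icc 0 d with hB
    have hBne : (0:ℝ) ∈ B := ⟨by rw [Set.mem_setOf_eq, hγ0]; exact hpK, le_refl 0, hdpos.le⟩
    have hBclosed : IsClosed B := (hKcl.preimage hparam.cont).inter isClosed_Icc
    have hBbdd : BddAbove B := BddAbove.mono Set.inter_subset_right bddAbove_Icc
    set β := sSup B with hβ
    have hβB : β ∈ B := hBclosed.csSup_mem ⟨0, hBne⟩ hBbdd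
    obtain ⟨hβK, hβ0, hβd⟩ := hβB
    rw [Set.mem_setOf_eq] at hβK
    have hβlt : β < d := by
      rcases eq_or_lt_of_le hβd with he | hl
      · exfalso; apply hzK; rw [← hγd, ← he]; exact hβK
      · exact hl
    have hβF : γ β ∈ frontier K := by
      rw [hKcl.frontier_eq]
      refine ⟨hβK, fun hint => ?_⟩
      obtain ⟨ε, hε, hball⟩ := Metric.isOpen_iff.mp isOpen_interior _ hint
      have hδ0 : 0 < min (ε/2) (d - β) := lt_min (by linarith) (by linarith)
      have hmem : β + min (ε/2) (d - β) ∈ B := by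
        refine ⟨?_, ⟨by linarith, ?_⟩⟩
        · rw [Set.mem_setOf_eq]
          apply interior_subset; apply hball
          rw [Metric.mem_ball]
          have hd := hparam (β + min (ε/2) (d - β)) β
          rw [hd, show β + min (ε/2) (d - β) - β = min (ε/2) (d - β) by ring,
            abs_of_nonneg hδ0.le]
          calc min (ε/2) (d - β) ≤ ε/2 := min_le_left _ _
            _ < ε := by linarith
        · linarith [min_le_right (ε/2) (d - β)]
      have hle := le_csSup hBbdd hmem
      rw [← hβ] at hle
      linarith
    have hkey := part2 _ hβF
    have hdpβ : dist p (γ β) = β := by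
      have hd := hparam 0 β
      rw [hγ0] at hd
      rw [hd, abs_of_nonpos (by linarith), neg_sub, sub_zero]
    rw [hdpβ] at hkey
    linarith
end

section
/- Let K be a convex body in the hyperbolic plane ℍ that is symmetric about a point p in its interior, and suppose there is a constant c such that every projection of K onto a geodesic line through p has length c (Metric.diam (P_Γ(K)) = c for all Γ ∈ H_p). Then K is a disc; more precisely, K = Metric.closedBall p (c/2). -/
open scoped UpperHalfPlane
open Set Metric

noncomputable section DiscAux
namespace DiscAux
open scoped MatrixGroups
open Real


/-- vertical geodesic through i -/
def vL (t : ℝ) : ℍ := UpperHalfPlane.mk ⟨0, Real.exp t⟩ (Real.exp_pos t)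

lemma vL_re (t : ℝ) : (vL t).re = 0 := rfl
lemma vL_im (t : ℝ) : (vL t).im = Real.exp t := rfl

lemma isometry_vL : Isometry vL := UpperHalfPlane.isometry_vertical_line 0

lemma dist_vL (s t : ℝ) : dist (vL s) (vL t) = |s - t| := by
  rw [isometry_vL.dist_eq, Real.dist_eq]

lemma vL_zero : vL 0 = UpperHalfPlane.I := by
  ext
  simp [vL, UpperHalfPlane.coe_mk, UpperHalfPlane.coe_I, Complex.ext_iff]

def A (k : ℍ) : ℝ := k.re ^ 2 + k.im ^ 2

lemma A_pos (k : ℍ) : 0 < A k := by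
  have := k.im_pos; unfold A; nlinarith

lemma sqrtA_pos (k : ℍ) : 0 < Real.sqrt (A k) := Real.sqrt_pos.mpr (A_pos k)

lemma sq_sqrtA (k : ℍ) : Real.sqrt (A k) ^ 2 = A k := Real.sq_sqrt (A_pos k).le

def Rr (k : ℍ) : ℝ := Real.sqrt (A k) / k.im

def Tt (k : ℍ) : ℝ := Real.arsinh ((A k - 1) / (2 * Real.sqrt (A k)))

lemma Rr_pos (k : ℍ) : 0 < Rr k := div_pos (sqrtA_pos k) k.im_pos

lemma one_le_Rr (k : ℍ) : 1 ≤ Rr k := by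
  rw [Rr, le_div_iff₀ k.im_pos, one_mul]
  rw [show k.im = Real.sqrt (k.im ^ 2) by rw [Real.sqrt_sq k.im_pos.le]]
  apply Real.sqrt_le_sqrt
  unfold A; nlinarith [sq_nonneg k.re, Real.sq_sqrt (sq_nonneg k.im)]

lemma Rr_sinh (k : ℍ) : Rr k * Real.sinh (Tt k) = (A k - 1) / (2 * k.im) := by
  have h1 : Real.sqrt (A k) ≠ 0 := (sqrtA_pos k).ne'
  have h2 : k.im ≠ 0 := k.im_pos.ne'
  rw [Tt, Real.sinh_arsinh, Rr]
  field_simp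

lemma Rr_cosh (k : ℍ) : Rr k * Real.cosh (Tt k) = (A k + 1) / (2 * k.im) := by
  rw [Tt, Real.cosh_arsinh]
  have hs := sq_sqrtA k
  have hA := A_pos k
  have h1 : Real.sqrt (A k) ≠ 0 := (sqrtA_pos k).ne'
  have h2 : k.im ≠ 0 := k.im_pos.ne'
  have h4 : (2 * Real.sqrt (A k)) ^ 2 = 4 * A k := by rw [mul_pow, hs]; ring
  have h : (1 + ((A k - 1) / (2 * Real.sqrt (A k))) ^ 2)
      = ((A k + 1) / (2 * Real.sqrt (A k))) ^ 2 := by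
    rw [div_pow, div_pow, h4]
    field_simp
    ring
  have h5 : 0 ≤ (A k + 1) / (2 * Real.sqrt (A k)) :=
    div_nonneg (by linarith) (by positivity)
  rw [h, Real.sqrt_sq h5, Rr]
  field_simp

lemma cosh_dist_vL (k : ℍ) (t : ℝ) :
    Real.cosh (dist k (vL t)) = Rr k * Real.cosh (t - Tt k) := by
  have him := k.im_pos
  have het := Real.exp_pos t
  have h1 : Real.cosh (dist k (vL t))
      = (A k + 1) / (2 * k.im) * Real.cosh t - (A k - 1) / (2 * k.im) * Real.sinh t := by
    rw [UpperHalfPlane.cosh_dist]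
    have hd : dist (k : ℂ) ((vL t : ℍ) : ℂ) ^ 2 = k.re ^ 2 + (k.im - Real.exp t) ^ 2 := by
      rw [Complex.dist_eq, Complex.sq_norm, Complex.normSq_apply, Complex.sub_re,
        Complex.sub_im]
      simp only [UpperHalfPlane.coe_re, UpperHalfPlane.coe_im, vL_re, vL_im]
      ring
    rw [hd, vL_im, Real.cosh_eq, Real.sinh_eq, Real.exp_neg]
    unfold A
    field_simp
    ring
  rw [h1, Real.cosh_sub]
  have h2 : Rr k * (Real.cosh t * Real.cosh (Tt k) - Real.sinh t * Real.sinh (Tt k))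
      = (Rr k * Real.cosh (Tt k)) * Real.cosh t - (Rr k * Real.sinh (Tt k)) * Real.sinh t := by
    ring
  rw [h2, Rr_cosh, Rr_sinh]


def SR : SL(2, ℝ) := ⟨!![0, -1; 1, 0], by norm_num [Matrix.det_fin_two_of]⟩

lemma SR_coe (z : ℍ) : ((SR • z : ℍ) : ℂ) = -(z : ℂ)⁻¹ := by
  rw [UpperHalfPlane.specialLinearGroup_apply, UpperHalfPlane.coe_mk]
  simp [SR]
  rw [neg_div, one_div]

def Aff (a b : ℝ) (hb : 0 < b) : SL(2, ℝ) :=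
  ⟨!![Real.sqrt b, a / Real.sqrt b; 0, 1 / Real.sqrt b], by
    have : Real.sqrt b ≠ 0 := (Real.sqrt_pos.mpr hb).ne'
    rw [Matrix.det_fin_two_of]; field_simp; ring⟩

lemma Aff_coe (a b : ℝ) (hb : 0 < b) (z : ℍ) :
    ((Aff a b hb • z : ℍ) : ℂ) = b * z + a := by
  have h : Real.sqrt b ≠ 0 := (Real.sqrt_pos.mpr hb).ne'
  have h2 : (Real.sqrt b : ℂ) ≠ 0 := by exact_mod_cast h
  rw [UpperHalfPlane.specialLinearGroup_apply, UpperHalfPlane.coe_mk]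
  simp [Aff]
  field_simp
  rw [show ((Real.sqrt b : ℂ)) ^ 2 = ((Real.sqrt b ^ 2 : ℝ) : ℂ) by
    push_cast; ring, Real.sq_sqrt hb.le]
  ring

lemma cosh_dist' (z w : ℍ) : Real.cosh (dist z w)
    = 1 + ((z.re - w.re)^2 + (z.im - w.im)^2) / (2 * z.im * w.im) := by
  rw [UpperHalfPlane.cosh_dist, Complex.dist_eq, Complex.sq_norm, Complex.normSq_apply,
    Complex.sub_re, Complex.sub_im]
  simp only [UpperHalfPlane.coe_re, UpperHalfPlane.coe_im]
  ring


def Rot (x y : ℝ) (h : y ^ 2 + x ^ 2 = 1) : SL(2, ℝ) :=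
  ⟨!![y, x; -x, y], by rw [Matrix.det_fin_two_of]; nlinarith⟩

lemma Rot_coe (x y : ℝ) (h : y ^ 2 + x ^ 2 = 1) (z : ℍ) :
    ((Rot x y h • z : ℍ) : ℂ) = (y * z + x) / (-x * z + y) := by
  rw [UpperHalfPlane.specialLinearGroup_apply, UpperHalfPlane.coe_mk]
  simp [Rot]

lemma exists_rot (w : ℍ) : ∃ k : SL(2, ℝ),
    k • UpperHalfPlane.I = UpperHalfPlane.I ∧ k • vL (dist UpperHalfPlane.I w) = w := by
  set d := dist UpperHalfPlane.I w with hdd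
  set s := Real.exp d with hss
  set u := w.re with huu
  set v := w.im with hvv
  have hv : 0 < v := w.im_pos
  have hs1 : 1 ≤ s := Real.one_le_exp dist_nonneg
  have hvs : v ≤ s := by
    have h := UpperHalfPlane.im_le_im_mul_exp_dist w UpperHalfPlane.I
    rwa [UpperHalfPlane.I_im, one_mul, dist_comm] at h
  have hE1 : s * (u ^ 2 + v ^ 2 + 1) = v * (s ^ 2 + 1) := by
    have h1 : Real.cosh d = 1 + ((UpperHalfPlane.I.re - u)^2 + (UpperHalfPlane.I.im - v)^2)
        / (2 * UpperHalfPlane.I.im * v) := cosh_dist' UpperHalfPlane.I w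
    rw [UpperHalfPlane.I_re, UpperHalfPlane.I_im, Real.cosh_eq, Real.exp_neg, ← hss] at h1
    field_simp at h1
    nlinarith [h1]
  clear_value d s u v
  by_cases hs : s = 1
  · have hd0 : d = 0 := by rwa [hss, Real.exp_eq_one_iff] at hs
    have hw : w = UpperHalfPlane.I := by
      have h2 : dist UpperHalfPlane.I w = 0 := by rw [← hdd, hd0]
      exact (dist_eq_zero.mp h2).symm
    exact ⟨1, one_smul _ _, by rw [one_smul, hd0, vL_zero, hw]⟩
  · have hs1' : 1 < s := lt_of_le_of_ne hs1 (Ne.symm hs)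
    by_cases hsv : v = s
    · have hu2 : u ^ 2 = 0 := by
        have h := hE1
        rw [hsv] at h
        nlinarith [h]
      have hu : u = 0 := by
        have := sq_eq_zero_iff.mp hu2; exact this
      have hw : w = vL d := by
        refine UpperHalfPlane.ext' ?_ ?_
        · rw [vL_re, ← huu]; exact hu
        · rw [vL_im, ← hss, ← hvv]; exact hsv
      exact ⟨1, one_smul _ _, by rw [one_smul, ← hw]⟩
    · have hvs' : v < s := lt_of_le_of_ne hvs hsv
      have hden : 0 < v * (s ^ 2 - 1) := by nlinarith
      have hsvpos : 0 < s - v := by linarith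
      set q : ℝ := (s - v) / (v * (s ^ 2 - 1)) with hq
      have hq0 : 0 < q := div_pos hsvpos hden
      set x := Real.sqrt q with hxx
      have hx0 : 0 < x := Real.sqrt_pos.mpr hq0
      have hx2 : x ^ 2 = q := Real.sq_sqrt hq0.le
      set y := -u * s / (v * (s ^ 2 - 1) * x) with hy
      have hus : u ^ 2 * s = (v * s - 1) * (s - v) := by nlinarith [hE1]
      have h1 : y * (v * (s ^ 2 - 1) * x) = -(u * s) := by
        rw [hy]; field_simp
        rw [mul_div_assoc, div_self (by nlinarith : (0:ℝ) < s ^ 2 - 1).ne', mul_one]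
      have hx2V : x ^ 2 * (v * (s ^ 2 - 1)) = s - v := by
        rw [hx2, hq]; field_simp
        exact div_self (by nlinarith : (0:ℝ) < s ^ 2 - 1).ne'
      clear_value q x y
      have h2 : y ^ 2 * ((v * (s ^ 2 - 1)) ^ 2 * x ^ 2) = u ^ 2 * s ^ 2 := by
        have h2' := congrArg (fun r => r ^ 2) h1
        nlinarith [h2']
      have h3 : y ^ 2 * ((v * (s ^ 2 - 1)) * (s - v)) = u ^ 2 * s ^ 2 := by
        linear_combination h2 - y ^ 2 * (v * (s ^ 2 - 1)) * hx2V
      have hdet : y ^ 2 + x ^ 2 = 1 := by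
        have h4 : (y ^ 2 + x ^ 2) * ((v * (s ^ 2 - 1)) * (s - v))
            = 1 * ((v * (s ^ 2 - 1)) * (s - v)) := by
          linear_combination h3 + (s - v) * hx2V + s * hus
        exact mul_right_cancel₀ (mul_pos hden hsvpos).ne' h4
      have hVx : (v * (s ^ 2 - 1)) * x ≠ 0 := by positivity
      have hE2 : x = u * y + v * x * s := by
        refine mul_right_cancel₀ hVx ?_
        linear_combination (1 - v * s) * hx2V - u * h1 + hus
      have hE3 : y * s = v * y - u * x * s := by
        refine mul_right_cancel₀ hVx ?_
        linear_combination (s - v) * h1 + u * s * hx2V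
      have hE2' : (x : ℂ) = u * y + v * x * s := by exact_mod_cast hE2
      have hE3' : (y : ℂ) * s = v * y - u * x * s := by exact_mod_cast hE3
      refine ⟨Rot x y hdet, ?_, ?_⟩
      · apply UpperHalfPlane.ext
        rw [Rot_coe, UpperHalfPlane.coe_I]
        have hne : (-x * Complex.I + y : ℂ) ≠ 0 := by
          intro hcon
          have h5 := congrArg Complex.im hcon
          simp at h5
          exact hx0.ne' h5
        rw [div_eq_iff hne]
        linear_combination (x : ℂ) * Complex.I_sq
      · apply UpperHalfPlane.ext
        rw [Rot_coe]
        have hvld : ((vL d : ℍ) : ℂ) = (s : ℂ) * Complex.I := by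
          rw [hss]
          apply Complex.ext <;>
            simp [vL, UpperHalfPlane.coe_mk, -Complex.ofReal_exp]
        rw [hvld]
        have hxs : 0 < x * s := mul_pos hx0 (by linarith)
        have him : ((-x : ℂ) * ((s : ℂ) * Complex.I) + (y : ℂ)).im = -(x * s) := by
          simp
        have hne : (-x * ((s : ℂ) * Complex.I) + y : ℂ) ≠ 0 := by
          intro hcon
          rw [hcon, Complex.zero_im] at him
          have : (0:ℝ) < x * s := hxs
          linarith [him]
        rw [div_eq_iff hne]
        have hw : (w : ℂ) = (u : ℂ) + (v : ℂ) * Complex.I := by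
          rw [huu, hvv]
          exact_mod_cast (UpperHalfPlane.re_add_im w).symm
        rw [hw]
        linear_combination hE2' + Complex.I * hE3' + (v : ℂ) * x * s * Complex.I_sq

lemma eq_of_cosh_eq {a b : ℝ} (ha : 0 ≤ a) (hb : 0 ≤ b) (h : Real.cosh a = Real.cosh b) :
    a = b := by
  have h1 := Real.cosh_le_cosh.mp h.le
  have h2 := Real.cosh_le_cosh.mp h.ge
  rw [abs_of_nonneg ha, abs_of_nonneg hb] at h1 h2
  linarith

lemma SR_vL (t : ℝ) : SR • vL t = vL (-t) := by
  apply UpperHalfPlane.ext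
  rw [SR_coe]
  have h1 : ((vL t : ℍ) : ℂ) = (Real.exp t : ℂ) * Complex.I := by
    apply Complex.ext <;> simp [vL, UpperHalfPlane.coe_mk, -Complex.ofReal_exp]
  have h2 : ((vL (-t) : ℍ) : ℂ) = (Real.exp (-t) : ℂ) * Complex.I := by
    apply Complex.ext <;> simp [vL, UpperHalfPlane.coe_mk, -Complex.ofReal_exp]
  rw [h1, h2, Real.exp_neg, mul_inv, Complex.inv_I]
  push_cast
  have he : (Real.exp t : ℂ) ≠ 0 := by
    exact_mod_cast (Real.exp_pos t).ne'
  field_simp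

lemma SR_re (y : ℍ) : (SR • y).re = -(y.re / (y.re ^ 2 + y.im ^ 2)) := by
  have hN : Complex.normSq (y : ℂ) = y.re ^ 2 + y.im ^ 2 := by
    rw [Complex.normSq_apply]
    simp only [UpperHalfPlane.coe_re, UpperHalfPlane.coe_im]
    ring
  rw [← UpperHalfPlane.coe_re, SR_coe, Complex.neg_re, Complex.inv_re, hN,
    UpperHalfPlane.coe_re]

lemma SR_im (y : ℍ) : (SR • y).im = y.im / (y.re ^ 2 + y.im ^ 2) := by
  have hN : Complex.normSq (y : ℂ) = y.re ^ 2 + y.im ^ 2 := by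
    rw [Complex.normSq_apply]
    simp only [UpperHalfPlane.coe_re, UpperHalfPlane.coe_im]
    ring
  rw [← UpperHalfPlane.coe_im, SR_coe, Complex.neg_im, Complex.inv_im, hN,
    UpperHalfPlane.coe_im]
  ring

lemma dist_SR (y : ℍ) : dist y (SR • y) = 2 * dist y UpperHalfPlane.I := by
  have hv := y.im_pos
  have hN : (0:ℝ) < y.re ^ 2 + y.im ^ 2 := by nlinarith
  apply eq_of_cosh_eq dist_nonneg (by positivity)
  have hL := cosh_dist' y (SR • y)
  rw [SR_re, SR_im] at hL
  have hR := cosh_dist' y UpperHalfPlane.I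
  rw [UpperHalfPlane.I_re, UpperHalfPlane.I_im] at hR
  have h2 : Real.cosh (2 * dist y UpperHalfPlane.I)
      = 2 * Real.cosh (dist y UpperHalfPlane.I) ^ 2 - 1 := by
    rw [Real.cosh_two_mul, Real.sinh_sq]
    ring
  rw [hL, h2, hR]
  field_simp
  ring

lemma exists_g (p z : ℍ) : ∃ g : SL(2, ℝ),
    g • vL 0 = p ∧ g • vL (dist p z) = z := by
  have hb := p.im_pos
  set g₁ := Aff p.re p.im hb with hg
  have hg₁I : g₁ • UpperHalfPlane.I = p := by
    apply UpperHalfPlane.ext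
    rw [Aff_coe, UpperHalfPlane.coe_I]
    rw [← UpperHalfPlane.re_add_im p]
    ring
  have hdw : dist UpperHalfPlane.I (g₁⁻¹ • z) = dist p z := by
    have h := (dist_smul g₁ UpperHalfPlane.I (g₁⁻¹ • z)).symm
    rwa [smul_inv_smul, hg₁I] at h
  obtain ⟨k, hkI, hkw⟩ := exists_rot (g₁⁻¹ • z)
  refine ⟨g₁ * k, ?_, ?_⟩
  · rw [mul_smul, vL_zero, hkI, hg₁I]
  · rw [mul_smul, ← hdw, hkw, smul_inv_smul]

def gl (g : SL(2, ℝ)) (t : ℝ) : ℍ := g • vL t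
def Ft (g : SL(2, ℝ)) (k : ℍ) : ℝ := Tt (g⁻¹ • k)
def Rg (g : SL(2, ℝ)) (k : ℍ) : ℝ := Rr (g⁻¹ • k)

variable (g : SL(2, ℝ))

lemma exists_gl (p z : ℍ) : ∃ g : SL(2, ℝ), gl g 0 = p ∧ gl g (dist p z) = z :=
  exists_g p z

lemma dist_gl (k : ℍ) (t : ℝ) : dist k (gl g t) = dist (g⁻¹ • k) (vL t) := by
  rw [gl, ← dist_smul g⁻¹ k (g • vL t), inv_smul_smul]

lemma cosh_dist_gl (k : ℍ) (t : ℝ) :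
    Real.cosh (dist k (gl g t)) = Rg g k * Real.cosh (t - Ft g k) := by
  rw [dist_gl, cosh_dist_vL]; rfl

lemma one_le_Rg (k : ℍ) : 1 ≤ Rg g k := one_le_Rr _
lemma Rg_pos (k : ℍ) : 0 < Rg g k := Rr_pos _

lemma dist_gl_param (s t : ℝ) : dist (gl g s) (gl g t) = |s - t| := by
  rw [gl, gl, dist_smul, dist_vL]

lemma isometry_gl : Isometry (gl g) :=
  Isometry.of_dist_eq fun s t => by rw [dist_gl_param, Real.dist_eq]

lemma gl_injective : Function.Injective (gl g) := fun s t h => by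
  have h1 := dist_gl_param g s t
  rw [h, dist_self] at h1
  have h2 := abs_eq_zero.mp h1.symm
  linarith

lemma geodesicParam_gl : IsGeodesicParam (gl g) := dist_gl_param g

lemma geodesicLine_gl : IsGeodesicLine (Set.range (gl g)) := ⟨gl g, geodesicParam_gl g, rfl⟩

lemma dist_foot_le (k : ℍ) (t : ℝ) : dist k (gl g (Ft g k)) ≤ dist k (gl g t) := by
  have h1 := cosh_dist_gl g k (Ft g k)
  have h2 := cosh_dist_gl g k t
  rw [sub_self, Real.cosh_zero, mul_one] at h1
  have h3 : Real.cosh (dist k (gl g (Ft g k))) ≤ Real.cosh (dist k (gl g t)) := by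
    rw [h1, h2]
    nlinarith [Rg_pos g k, Real.one_le_cosh (t - Ft g k)]
  have h4 := Real.cosh_le_cosh.mp h3
  rwa [abs_of_nonneg dist_nonneg, abs_of_nonneg dist_nonneg] at h4

lemma infDist_gl (k : ℍ) :
    Metric.infDist k (Set.range (gl g)) = dist k (gl g (Ft g k)) := by
  apply le_antisymm
  · exact Metric.infDist_le_dist_of_mem ⟨Ft g k, rfl⟩
  · by_contra h
    push_neg at h
    have hne : (Set.range (gl g)).Nonempty := ⟨gl g 0, 0, rfl⟩
    obtain ⟨q, ⟨t, rfl⟩, hq⟩ := (Metric.infDist_lt_iff hne).mp h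
    exact absurd hq (not_lt.mpr (dist_foot_le g k t))

lemma proj_eq (K : Set ℍ) : Proj (Set.range (gl g)) K = gl g '' (Ft g '' K) := by
  ext q
  constructor
  · rintro ⟨⟨t, rfl⟩, k, hk, hd⟩
    have h1 : dist k (gl g t) = dist k (gl g (Ft g k)) := by rw [hd, infDist_gl]
    have e2 := cosh_dist_gl g k (Ft g k)
    have e3 : Rg g k * Real.cosh (t - Ft g k) = Rg g k := by
      rw [← cosh_dist_gl, h1, e2, sub_self, Real.cosh_zero, mul_one]
    have e4 : Real.cosh (t - Ft g k) = 1 :=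
      mul_left_cancel₀ (Rg_pos g k).ne' (by rw [e3, mul_one])
    have e4' : Real.cosh (t - Ft g k) = Real.cosh 0 := by rw [e4, Real.cosh_zero]
    have e6 : t = Ft g k := by
      have h5 := Real.cosh_le_cosh.mp (le_of_eq e4')
      rw [abs_zero, abs_nonpos_iff, sub_eq_zero] at h5
      exact h5
    exact ⟨Ft g k, ⟨k, hk, rfl⟩, by rw [e6]⟩
  · rintro ⟨t', ⟨k, hk, rfl⟩, rfl⟩
    exact ⟨⟨Ft g k, rfl⟩, k, hk, (infDist_gl g k).symm⟩

def sig (g : SL(2, ℝ)) : ℍ → ℍ := fun x => (g * SR * g⁻¹) • x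

lemma sig_gl (t : ℝ) : sig g (gl g t) = gl g (-t) := by
  rw [sig, gl, gl, mul_smul, mul_smul, inv_smul_smul, SR_vL]

lemma dist_sig (x y : ℍ) : dist (sig g x) (sig g y) = dist x y := dist_smul _ _ _

lemma dist_sig_self (x : ℍ) : dist x (sig g x) = 2 * dist x (gl g 0) := by
  have h1 : dist x (sig g x) = dist (g⁻¹ • x) (SR • (g⁻¹ • x)) := by
    rw [sig, ← dist_smul g⁻¹ x ((g * SR * g⁻¹) • x), ← mul_smul]
    have h2 : g⁻¹ * (g * SR * g⁻¹) = SR * g⁻¹ := by group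
    rw [h2, mul_smul]
  rw [h1, dist_SR]
  rw [gl, vL_zero, ← dist_smul g⁻¹ x (g • UpperHalfPlane.I), inv_smul_smul]

lemma dist_sig_left (k : ℍ) : dist (gl g 0) (sig g k) = dist k (gl g 0) := by
  have h1 : sig g (gl g 0) = gl g 0 := by rw [sig_gl, neg_zero]
  calc dist (gl g 0) (sig g k) = dist (sig g (gl g 0)) (sig g k) := by rw [h1]
    _ = dist (gl g 0) k := dist_sig g _ _
    _ = dist k (gl g 0) := dist_comm _ _

lemma sig_mem {K : Set ℍ} {p : ℍ} (hg0 : gl g 0 = p) (hsym : SymmetricAbout K p)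
    {k : ℍ} (hk : k ∈ K) : sig g k ∈ K := by
  subst hg0
  refine hsym k hk (sig g k) ?_ ?_
  · exact (dist_sig_left g k).symm
  · rw [dist_sig_self, dist_sig_left]
    ring

lemma Ft_sig (k : ℍ) : Ft g (sig g k) = -Ft g k := by
  have hall : ∀ t : ℝ, Rg g (sig g k) * Real.cosh (t - Ft g (sig g k))
      = Rg g k * Real.cosh (t + Ft g k) := by
    intro t
    have h1 := cosh_dist_gl g (sig g k) t
    have h2 : dist (sig g k) (gl g t) = dist k (gl g (-t)) := by
      rw [show gl g t = sig g (gl g (-t)) by rw [sig_gl, neg_neg], dist_sig]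
    rw [h2, cosh_dist_gl, show -t - Ft g k = -(t + Ft g k) by ring, Real.cosh_neg] at h1
    exact h1.symm
  have ha := hall (-Ft g k)
  have hb := hall (Ft g (sig g k))
  rw [neg_add_cancel, Real.cosh_zero, mul_one] at ha
  rw [sub_self, Real.cosh_zero, mul_one] at hb
  set c := Ft g (sig g k) + Ft g k with hc
  have ha' : Rg g (sig g k) * Real.cosh c = Rg g k := by
    rw [← ha]
    congr 1
    rw [show -Ft g k - Ft g (sig g k) = -c by rw [hc]; ring, Real.cosh_neg]
  have h6 : Rg g k * Real.cosh c ^ 2 = Rg g k * 1 := by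
    rw [mul_one]
    linear_combination ha' - Real.cosh c * hb
  have h7 : Real.cosh c ^ 2 = 1 := mul_left_cancel₀ (Rg_pos g k).ne' h6
  have h8 : Real.cosh c ≤ 1 := by nlinarith [Real.one_le_cosh c]
  have h9 : Real.cosh c = 1 := le_antisymm h8 (Real.one_le_cosh c)
  have h9' : Real.cosh c = Real.cosh 0 := by rw [h9, Real.cosh_zero]
  have h10 : c = 0 := by
    have h5 := Real.cosh_le_cosh.mp (le_of_eq h9')
    rwa [abs_zero, abs_nonpos_iff] at h5
  have := hc ▸ h10
  linarith [this]

lemma continuous_Tt : Continuous Tt := by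
  have hA : Continuous A :=
    (UpperHalfPlane.continuous_re.pow 2).add (UpperHalfPlane.continuous_im.pow 2)
  apply Real.continuous_arsinh.comp
  apply Continuous.div
  · exact hA.sub continuous_const
  · exact continuous_const.mul (Real.continuous_sqrt.comp hA)
  · intro k
    exact (mul_pos two_pos (sqrtA_pos k)).ne'

lemma continuous_Ft : Continuous (Ft g) :=
  continuous_Tt.comp (isometry_smul ℍ g⁻¹).continuous

lemma Ft_gl (t : ℝ) : Ft g (gl g t) = t := by
  have h := infDist_gl g (gl g t)
  have h0 : Metric.infDist (gl g t) (Set.range (gl g)) = 0 :=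
    Metric.infDist_zero_of_mem ⟨t, rfl⟩
  rw [h0] at h
  exact (gl_injective g (dist_eq_zero.mp h.symm)).symm

lemma abs_Ft_le (k : ℍ) : |Ft g k| ≤ dist k (gl g 0) := by
  have h1 := cosh_dist_gl g k 0
  rw [zero_sub, Real.cosh_neg] at h1
  have h2 : Real.cosh (Ft g k) ≤ Real.cosh (dist k (gl g 0)) := by
    rw [h1]
    nlinarith [one_le_Rg g k, Real.cosh_pos (Ft g k)]
  have h3 := Real.cosh_le_cosh.mp h2
  rwa [abs_of_nonneg dist_nonneg] at h3

end DiscAux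
end DiscAux

open DiscAux
open scoped MatrixGroups

/-- A convex body symmetric about an interior point `p`, all of whose projections onto
geodesic lines through `p` have constant length `c`, is the disc of radius `c/2` centered
at `p`. -/
theorem symmetric_constantProjections_is_disc (K : Set ℍ) (p : ℍ) (c : ℝ)
    (hK : IsConvexBody K) (hp : p ∈ interior K) (hsym : SymmetricAbout K p)
    (hproj : ∀ Γ : Set ℍ, IsGeodesicLine Γ → p ∈ Γ → Metric.diam (Proj Γ K) = c) :
    K = Metric.closedBall p (c / 2) := by
  classical
  obtain ⟨hKcomp, hKconv, hKint⟩ := hK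
  have hpK : p ∈ K := interior_subset hp
  have hc0 : 0 ≤ c := by
    obtain ⟨g, hg0, -⟩ := exists_gl p p
    have h := hproj (Set.range (gl g)) (geodesicLine_gl g) ⟨0, hg0⟩
    rw [← h]
    exact Metric.diam_nonneg
  have hdiam : ∀ g : SL(2, ℝ), gl g 0 = p → Metric.diam (Ft g '' K) = c := by
    intro g hg0
    have h := hproj (Set.range (gl g)) (geodesicLine_gl g) ⟨0, hg0⟩
    rw [proj_eq, (isometry_gl g).diam_image] at h
    exact h
  have hA : K ⊆ Metric.closedBall p (c / 2) := by
    intro x hx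
    obtain ⟨g, hg0, hgd⟩ := exists_gl p x
    have hσx : sig g x ∈ K := sig_mem g hg0 hsym hx
    have hFx : Ft g x = dist p x := by
      conv_lhs => rw [← hgd]
      rw [Ft_gl]
    have hFσ : Ft g (sig g x) = -dist p x := by rw [Ft_sig, hFx]
    obtain ⟨M, hM⟩ := hKcomp.isBounded.subset_closedBall p
    have hbdd : Bornology.IsBounded (Ft g '' K) := by
      apply (Metric.isBounded_Icc (-M) M).subset
      rintro - ⟨k, hk, rfl⟩
      have h1 := abs_Ft_le g k
      rw [hg0] at h1
      have h2 : dist k p ≤ M := Metric.mem_closedBall.mp (hM hk)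
      exact Set.mem_Icc.mpr (abs_le.mp (le_trans h1 h2))
    have hdist : dist (Ft g x) (Ft g (sig g x)) ≤ c := by
      rw [← hdiam g hg0]
      exact Metric.dist_le_diam_of_mem hbdd ⟨x, hx, rfl⟩ ⟨sig g x, hσx, rfl⟩
    rw [hFx, hFσ, Real.dist_eq, sub_neg_eq_add,
      abs_of_nonneg (by positivity : (0:ℝ) ≤ dist p x + dist p x)] at hdist
    rw [Metric.mem_closedBall, dist_comm]
    linarith
  apply Set.Subset.antisymm hA
  intro z hz
  obtain ⟨g, hg0, hgd⟩ := exists_gl p z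
  have hdle : dist p z ≤ c / 2 := by
    rw [dist_comm]
    exact Metric.mem_closedBall.mp hz
  have hTcomp : IsCompact (Ft g '' K) := hKcomp.image (continuous_Ft g)
  have hTne : (Ft g '' K).Nonempty := ⟨Ft g p, p, hpK, rfl⟩
  obtain ⟨t₀, ht₀T, hmax⟩ :=
    hTcomp.exists_isMaxOn hTne (continuous_abs.continuousOn (s := Ft g '' K))
  have hdiamT := hdiam g hg0
  have hct : c ≤ 2 * |t₀| := by
    rw [← hdiamT]
    apply Metric.diam_le_of_forall_dist_le (by positivity)
    intro a ha b hb
    rw [Real.dist_eq]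
    have h1 : |a| ≤ |t₀| := hmax ha
    have h2 : |b| ≤ |t₀| := hmax hb
    calc |a - b| ≤ |a| + |b| := abs_sub _ _
      _ ≤ 2 * |t₀| := by linarith
  obtain ⟨k, hkK, hkt⟩ := ht₀T
  have hRg := one_le_Rg g k
  have hkp : dist k p ≤ c / 2 := Metric.mem_closedBall.mp (hA hkK)
  have e1 : Real.cosh (dist k p) = Rg g k * Real.cosh t₀ := by
    have h := cosh_dist_gl g k 0
    rw [hg0, zero_sub, Real.cosh_neg, hkt] at h
    exact h
  have e2 : Real.cosh (c / 2) ≤ Real.cosh t₀ :=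
    Real.cosh_le_cosh.mpr
      (show |c / 2| ≤ |t₀| by rw [abs_of_nonneg (by linarith)]; linarith)
  have e3 : Real.cosh (dist k p) ≤ Real.cosh (c / 2) :=
    Real.cosh_le_cosh.mpr
      (show |dist k p| ≤ |c / 2| by
        rw [abs_of_nonneg dist_nonneg, abs_of_nonneg (by linarith)]; exact hkp)
  have hcosht : 0 < Real.cosh t₀ := Real.cosh_pos t₀
  have eR : Rg g k = 1 := by nlinarith
  have et : Real.cosh t₀ = Real.cosh (c / 2) := by nlinarith
  have ek : k = gl g t₀ := by
    have h := cosh_dist_gl g k t₀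
    rw [hkt, sub_self, Real.cosh_zero, mul_one, eR] at h
    have h2 : dist k (gl g t₀) = 0 :=
      eq_of_cosh_eq dist_nonneg le_rfl (by rw [h, Real.cosh_zero])
    exact dist_eq_zero.mp h2
  have habs : |t₀| = c / 2 :=
    eq_of_cosh_eq (abs_nonneg t₀) (by linarith) (by rw [Real.cosh_abs, et])
  have hmem1 : gl g t₀ ∈ K := ek ▸ hkK
  have hmem2 : gl g (-t₀) ∈ K := by
    have h := sig_mem g hg0 hsym hkK
    rwa [ek, sig_gl] at h
  have hends : gl g (c / 2) ∈ K ∧ gl g (-(c / 2)) ∈ K := by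
    rcases abs_cases t₀ with ⟨h1, -⟩ | ⟨h1, -⟩
    · rw [h1] at habs
      rw [← habs]
      exact ⟨hmem1, hmem2⟩
    · rw [h1] at habs
      constructor
      · rw [show c / 2 = -t₀ by linarith]
        exact hmem2
      · rw [show -(c / 2) = t₀ by linarith]
        exact hmem1
  have hzseg : z ∈ Seg (gl g (-(c / 2))) (gl g (c / 2)) := by
    have hz' : z = gl g (dist p z) := hgd.symm
    have hd0 : 0 ≤ dist p z := dist_nonneg
    rw [hz', Seg, Set.mem_setOf_eq, dist_gl_param, dist_gl_param, dist_gl_param]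
    rw [abs_of_nonpos (by linarith), abs_of_nonpos (by linarith),
      abs_of_nonpos (by linarith)]
    ring
  exact hKconv hends.2 hends.1 hzseg
end

section
/- Fix t > 0. Let R, r, R', r' be real numbers with R > r > t and R' > r' > t. If Real.log (R / r) = Real.log (R' / r') and Real.log (Real.sqrt (R^2 − t^2) / Real.sqrt (r^2 − t^2)) = Real.log (Real.sqrt (R'^2 − t^2) / Real.sqrt (r'^2 − t^2)), then R = R' and r = r'. (In the upper half-plane model, these two logarithms are the lengths of the orthogonal and shifted projections of a slab bounded by concentric semicircular geodesics of radii r < R onto the vertical geodesics at Euclidean distance 0 and t from their common center; the injectivity shows a convex body is determined by its projection lengths on these two families of geodesics.) -/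
/-- The map `(R, r) ↦ (log (R/r), log (√(R²−t²)/√(r²−t²)))` is injective on the domain
`{(R, r) | R > r > t}`: a convex body in the upper half-plane is determined by its
projection lengths onto the two families of vertical geodesics at distance `0` and `t`
from the center of its supporting semicircles. -/
theorem projections_two_families_determine (t R r R' r' : ℝ)
    (ht : 0 < t) (hRr : r < R) (hrt : t < r) (hRr' : r' < R') (hrt' : t < r')
    (h1 : Real.log (R / r) = Real.log (R' / r'))
    (h2 : Real.log (Real.sqrt (R ^ 2 - t ^ 2) / Real.sqrt (r ^ 2 - t ^ 2)) =
          Real.log (Real.sqrt (R' ^ 2 - t ^ 2) / Real.sqrt (r' ^ 2 - t ^ 2))) :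
    R = R' ∧ r = r' := by
  have hr0 : (0:ℝ) < r := ht.trans hrt
  have hR0 : (0:ℝ) < R := hr0.trans hRr
  have hr0' : (0:ℝ) < r' := ht.trans hrt'
  have hR0' : (0:ℝ) < R' := hr0'.trans hRr'
  have hrt2 : (0:ℝ) < r ^ 2 - t ^ 2 := by nlinarith
  have hRt2 : (0:ℝ) < R ^ 2 - t ^ 2 := by nlinarith
  have hrt2' : (0:ℝ) < r' ^ 2 - t ^ 2 := by nlinarith
  have hRt2' : (0:ℝ) < R' ^ 2 - t ^ 2 := by nlinarith
  -- remove the logs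
  have e1 : R / r = R' / r' := by
    have := congrArg Real.exp h1
    rwa [Real.exp_log (by positivity), Real.exp_log (by positivity)] at this
  have e2' : Real.sqrt (R ^ 2 - t ^ 2) / Real.sqrt (r ^ 2 - t ^ 2) =
      Real.sqrt (R' ^ 2 - t ^ 2) / Real.sqrt (r' ^ 2 - t ^ 2) := by
    have := congrArg Real.exp h2
    rwa [Real.exp_log (by positivity), Real.exp_log (by positivity)] at this
  have e1' : R * r' = R' * r := by
    field_simp at e1
    linarith
  have e2m : Real.sqrt (R ^ 2 - t ^ 2) * Real.sqrt (r' ^ 2 - t ^ 2) =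
      Real.sqrt (R' ^ 2 - t ^ 2) * Real.sqrt (r ^ 2 - t ^ 2) := by
    rw [div_eq_div_iff (by positivity) (by positivity)] at e2'
    linarith
  have e2 : (R ^ 2 - t ^ 2) * (r' ^ 2 - t ^ 2) = (R' ^ 2 - t ^ 2) * (r ^ 2 - t ^ 2) := by
    have := congrArg (· ^ 2) e2m
    simp only [mul_pow, Real.sq_sqrt hRt2.le, Real.sq_sqrt hrt2.le,
      Real.sq_sqrt hRt2'.le, Real.sq_sqrt hrt2'.le] at this
    exact this
  have hsq : R ^ 2 * r' ^ 2 - R' ^ 2 * r ^ 2 = 0 := by linear_combination (R * r' + R' * r) * e1'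
  have hs : R ^ 2 + r' ^ 2 - R' ^ 2 - r ^ 2 = 0 := by
    have h : t ^ 2 * (R ^ 2 + r' ^ 2 - R' ^ 2 - r ^ 2) = 0 := by
      linear_combination hsq - e2
    have ht2 : t ^ 2 ≠ 0 := by positivity
    exact (mul_eq_zero.mp h).resolve_left ht2
  have key : (r' ^ 2 - r ^ 2) * (R' ^ 2 - r' ^ 2) = 0 := by
    linear_combination hsq - r' ^ 2 * hs
  have hRr2' : (0:ℝ) < R' ^ 2 - r' ^ 2 := by nlinarith
  have hrr2 : r' ^ 2 - r ^ 2 = 0 := by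
    rcases mul_eq_zero.mp key with h | h
    · exact h
    · exact absurd h hRr2'.ne'
  have hr : r = r' := by
    have hz : (r - r') * (r + r') = 0 := by linear_combination -hrr2
    rcases mul_eq_zero.mp hz with h | h
    · linarith
    · nlinarith
  refine ⟨?_, hr⟩
  have : R * r' = R' * r' := by rw [e1', hr]
  exact mul_right_cancel₀ hr0'.ne' this
end

section
/- Let K be a convex body in the hyperbolic plane ℍ and let x, y ∈ K with dist x y = Metric.diam K. Then the geodesic line Γ through x and y is a double normal of K; moreover P_Γ(K) = K ∩ Γ = [x, y]. In particular, every convex body has at least one double normal. -/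
open scoped UpperHalfPlane
open Set Metric

noncomputable def ph0 (z : ℍ) : ℝ := (z.re ^ 2 + z.im ^ 2 + 1) / (2 * z.im)
noncomputable def ph1 (z : ℍ) : ℝ := z.re / z.im
noncomputable def ph2 (z : ℍ) : ℝ := (z.re ^ 2 + z.im ^ 2 - 1) / (2 * z.im)

lemma ph_Q (z w : ℍ) :
    ph0 z * ph0 w - ph1 z * ph1 w - ph2 z * ph2 w = Real.cosh (dist z w) := by
  rw [UpperHalfPlane.cosh_dist, Complex.dist_eq_re_im, Real.sq_sqrt (by positivity)]
  simp only [UpperHalfPlane.coe_re, UpperHalfPlane.coe_im, ph0, ph1, ph2]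
  have hz := z.im_pos
  have hw := w.im_pos
  field_simp
  ring

lemma null_orth_timelike {g0 g1 g2 u0 u1 u2 : ℝ}
    (h1 : g0 * g0 - g1 * g1 - g2 * g2 = 0)
    (h2 : g0 * u0 - g1 * u1 - g2 * u2 = 0)
    (h3 : u0 * u0 - u1 * u1 - u2 * u2 = 1) :
    g0 = 0 ∧ g1 = 0 ∧ g2 = 0 := by
  have key : g0 ^ 2 + (g1 * u2 - g2 * u1) ^ 2 = 0 := by
    linear_combination (-(g0 ^ 2)) * h3 - (u1 ^ 2 + u2 ^ 2) * h1 +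
      (g0 * u0 + g1 * u1 + g2 * u2) * h2
  have hg0 : g0 = 0 := by nlinarith [sq_nonneg g0, sq_nonneg (g1 * u2 - g2 * u1)]
  refine ⟨hg0, ?_, ?_⟩ <;> nlinarith [sq_nonneg g1, sq_nonneg g2]

lemma spacelike_of_orth_timelike {q0 q1 q2 u0 u1 u2 : ℝ}
    (h2 : q0 * u0 - q1 * u1 - q2 * u2 = 0)
    (h3 : u0 * u0 - u1 * u1 - u2 * u2 = 1) :
    q0 * q0 - q1 * q1 - q2 * q2 ≤ 0 := by
  have e2 : (q0 ^ 2 - q1 ^ 2 - q2 ^ 2) * u0 ^ 2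
      = -(q1 ^ 2 + q2 ^ 2) - (q1 * u2 - q2 * u1) ^ 2 := by
    linear_combination (q0 * u0 + q1 * u1 + q2 * u2) * h2 - (q1 ^ 2 + q2 ^ 2) * h3
  nlinarith [sq_nonneg q1, sq_nonneg q2, sq_nonneg (q1 * u2 - q2 * u1), sq_nonneg u0]

set_option maxHeartbeats 4000000 in
/-- For any geodesic param `γ` and any point `k`, `cosh (dist k (γ s)) = C cosh (s - s₀)`. -/
lemma geodesic_cosh_dist (γ : ℝ → ℍ) (hγ : IsGeodesicParam γ) (k : ℍ) :
    ∃ C s₀ : ℝ, 1 ≤ C ∧ ∀ s : ℝ, Real.cosh (dist k (γ s)) = C * Real.cosh (s - s₀) := by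
  have hQ : ∀ s t : ℝ, ph0 (γ s) * ph0 (γ t) - ph1 (γ s) * ph1 (γ t)
      - ph2 (γ s) * ph2 (γ t) = Real.cosh (s - t) := by
    intro s t
    rw [ph_Q, hγ s t, Real.cosh_abs]
  have hs1 : (0:ℝ) < Real.sinh 1 := Real.sinh_pos_iff.mpr one_pos
  have hs1' : Real.sinh 1 ≠ 0 := ne_of_gt hs1
  have pyth1 : Real.cosh 1 ^ 2 - Real.sinh 1 ^ 2 = 1 := Real.cosh_sq_sub_sinh_sq 1
  have e00 : ph0 (γ 0) * ph0 (γ 0) - ph1 (γ 0) * ph1 (γ 0) - ph2 (γ 0) * ph2 (γ 0) = 1 := by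
    simpa using hQ 0 0
  have e01 : ph0 (γ 0) * ph0 (γ 1) - ph1 (γ 0) * ph1 (γ 1) - ph2 (γ 0) * ph2 (γ 1)
      = Real.cosh 1 := by
    have := hQ 0 1
    rw [show (0:ℝ) - 1 = -1 by ring, Real.cosh_neg] at this
    exact this
  have e11 : ph0 (γ 1) * ph0 (γ 1) - ph1 (γ 1) * ph1 (γ 1) - ph2 (γ 1) * ph2 (γ 1) = 1 := by
    simpa using hQ 1 1
  -- structure: s1 * X_i = s1 * cosh s * u_i + sinh s * (W_i - c1 * u_i)
  have struct : ∀ s : ℝ,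
      Real.sinh 1 * ph0 (γ s) = Real.sinh 1 * Real.cosh s * ph0 (γ 0)
          + Real.sinh s * (ph0 (γ 1) - Real.cosh 1 * ph0 (γ 0)) ∧
      Real.sinh 1 * ph1 (γ s) = Real.sinh 1 * Real.cosh s * ph1 (γ 0)
          + Real.sinh s * (ph1 (γ 1) - Real.cosh 1 * ph1 (γ 0)) ∧
      Real.sinh 1 * ph2 (γ s) = Real.sinh 1 * Real.cosh s * ph2 (γ 0)
          + Real.sinh s * (ph2 (γ 1) - Real.cosh 1 * ph2 (γ 0)) := by
    intro s
    have ess : ph0 (γ s) * ph0 (γ s) - ph1 (γ s) * ph1 (γ s) - ph2 (γ s) * ph2 (γ s) = 1 := by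
      simpa using hQ s s
    have es0 : ph0 (γ s) * ph0 (γ 0) - ph1 (γ s) * ph1 (γ 0) - ph2 (γ s) * ph2 (γ 0)
        = Real.cosh s := by simpa using hQ s 0
    have es1 : ph0 (γ s) * ph0 (γ 1) - ph1 (γ s) * ph1 (γ 1) - ph2 (γ s) * ph2 (γ 1)
        = Real.cosh s * Real.cosh 1 - Real.sinh s * Real.sinh 1 := by
      have := hQ s 1; rwa [Real.cosh_sub] at this
    have pyths : Real.cosh s ^ 2 - Real.sinh s ^ 2 = 1 := Real.cosh_sq_sub_sinh_sq s
    have hnull := null_orth_timelike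
      (g0 := Real.sinh 1 * ph0 (γ s) - (Real.sinh 1 * Real.cosh s - Real.sinh s * Real.cosh 1)
        * ph0 (γ 0) - Real.sinh s * ph0 (γ 1))
      (g1 := Real.sinh 1 * ph1 (γ s) - (Real.sinh 1 * Real.cosh s - Real.sinh s * Real.cosh 1)
        * ph1 (γ 0) - Real.sinh s * ph1 (γ 1))
      (g2 := Real.sinh 1 * ph2 (γ s) - (Real.sinh 1 * Real.cosh s - Real.sinh s * Real.cosh 1)
        * ph2 (γ 0) - Real.sinh s * ph2 (γ 1))
      (u0 := ph0 (γ 0)) (u1 := ph1 (γ 0)) (u2 := ph2 (γ 0))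
      (h1 := by
        linear_combination (Real.sinh 1 ^ 2) * ess
          + (Real.sinh 1 * Real.cosh s - Real.sinh s * Real.cosh 1) ^ 2 * e00
          + Real.sinh s ^ 2 * e11
          - (2 * Real.sinh 1 * (Real.sinh 1 * Real.cosh s - Real.sinh s * Real.cosh 1)) * es0
          - (2 * Real.sinh 1 * Real.sinh s) * es1
          + (2 * (Real.sinh 1 * Real.cosh s - Real.sinh s * Real.cosh 1) * Real.sinh s) * e01
          - Real.sinh 1 ^ 2 * pyths - Real.sinh s ^ 2 * pyth1)
      (h2 := by
        linear_combination Real.sinh 1 * es0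
          - (Real.sinh 1 * Real.cosh s - Real.sinh s * Real.cosh 1) * e00
          - Real.sinh s * e01)
      (h3 := e00)
    obtain ⟨h0, h1, h2⟩ := hnull
    refine ⟨by linear_combination h0, by linear_combination h1, by linear_combination h2⟩
  -- coefficients of Phi k in the (u, v) frame
  set A := ph0 k * ph0 (γ 0) - ph1 k * ph1 (γ 0) - ph2 k * ph2 (γ 0) with hA
  set Bn := ph0 k * (ph0 (γ 1) - Real.cosh 1 * ph0 (γ 0))
    - ph1 k * (ph1 (γ 1) - Real.cosh 1 * ph1 (γ 0))
    - ph2 k * (ph2 (γ 1) - Real.cosh 1 * ph2 (γ 0)) with hBn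
  have hA_cosh : A = Real.cosh (dist k (γ 0)) := by rw [hA]; exact ph_Q k (γ 0)
  have hA1 : 1 ≤ A := by rw [hA_cosh]; exact Real.one_le_cosh _
  have Qpp : ph0 k * ph0 k - ph1 k * ph1 k - ph2 k * ph2 k = 1 := by
    have := ph_Q k k
    simpa using this
  -- the Cauchy–Schwarz step:  A² - (Bn/s1)² ≥ 1
  have hqu : (Real.sinh 1 ^ 2 * ph0 k - Real.sinh 1 ^ 2 * A * ph0 (γ 0)
        + Bn * (ph0 (γ 1) - Real.cosh 1 * ph0 (γ 0))) * ph0 (γ 0)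
      - (Real.sinh 1 ^ 2 * ph1 k - Real.sinh 1 ^ 2 * A * ph1 (γ 0)
        + Bn * (ph1 (γ 1) - Real.cosh 1 * ph1 (γ 0))) * ph1 (γ 0)
      - (Real.sinh 1 ^ 2 * ph2 k - Real.sinh 1 ^ 2 * A * ph2 (γ 0)
        + Bn * (ph2 (γ 1) - Real.cosh 1 * ph2 (γ 0))) * ph2 (γ 0) = 0 := by
    linear_combination (-(Real.sinh 1 ^ 2)) * hA
      + (-(Real.sinh 1 ^ 2) * A - Bn * Real.cosh 1) * e00 + Bn * e01
  have hqq : (Real.sinh 1 ^ 2 * ph0 k - Real.sinh 1 ^ 2 * A * ph0 (γ 0)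
        + Bn * (ph0 (γ 1) - Real.cosh 1 * ph0 (γ 0)))
        * (Real.sinh 1 ^ 2 * ph0 k - Real.sinh 1 ^ 2 * A * ph0 (γ 0)
        + Bn * (ph0 (γ 1) - Real.cosh 1 * ph0 (γ 0)))
      - (Real.sinh 1 ^ 2 * ph1 k - Real.sinh 1 ^ 2 * A * ph1 (γ 0)
        + Bn * (ph1 (γ 1) - Real.cosh 1 * ph1 (γ 0)))
        * (Real.sinh 1 ^ 2 * ph1 k - Real.sinh 1 ^ 2 * A * ph1 (γ 0)
        + Bn * (ph1 (γ 1) - Real.cosh 1 * ph1 (γ 0)))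
      - (Real.sinh 1 ^ 2 * ph2 k - Real.sinh 1 ^ 2 * A * ph2 (γ 0)
        + Bn * (ph2 (γ 1) - Real.cosh 1 * ph2 (γ 0)))
        * (Real.sinh 1 ^ 2 * ph2 k - Real.sinh 1 ^ 2 * A * ph2 (γ 0)
        + Bn * (ph2 (γ 1) - Real.cosh 1 * ph2 (γ 0)))
      = Real.sinh 1 ^ 4 - Real.sinh 1 ^ 4 * A ^ 2 + Real.sinh 1 ^ 2 * Bn ^ 2 := by
    linear_combination Real.sinh 1 ^ 4 * Qpp
      + (Real.sinh 1 ^ 4 * A ^ 2 + Real.cosh 1 ^ 2 * Bn ^ 2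
          + 2 * Real.sinh 1 ^ 2 * A * Bn * Real.cosh 1) * e00
      + Bn ^ 2 * e11
      + (-2 * Real.cosh 1 * Bn ^ 2 - 2 * Real.sinh 1 ^ 2 * A * Bn) * e01
      - Bn ^ 2 * pyth1
      + 2 * Real.sinh 1 ^ 4 * A * hA - 2 * Real.sinh 1 ^ 2 * Bn * hBn
  have hq0 := spacelike_of_orth_timelike hqu e00
  rw [hqq] at hq0
  have hAB : 1 ≤ A ^ 2 - (Bn / Real.sinh 1) ^ 2 := by
    have h1 : Bn ^ 2 / Real.sinh 1 ^ 2 ≤ A ^ 2 - 1 := by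
      rw [div_le_iff₀ (by positivity)]
      nlinarith [mul_pos hs1 hs1]
    have h2 : (Bn / Real.sinh 1) ^ 2 = Bn ^ 2 / Real.sinh 1 ^ 2 := by ring
    linarith [h2 ▸ h1]
  set B := Bn / Real.sinh 1 with hB
  set C := Real.sqrt (A ^ 2 - B ^ 2) with hC
  have hC2 : C ^ 2 = A ^ 2 - B ^ 2 := Real.sq_sqrt (by linarith)
  have hC1 : 1 ≤ C := by
    rw [hC, show (1:ℝ) = Real.sqrt 1 by simp]
    exact Real.sqrt_le_sqrt (by linarith)
  have hCpos : 0 < C := lt_of_lt_of_le one_pos hC1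
  refine ⟨C, Real.arsinh (-B / C), hC1, ?_⟩
  have hcosh₀ : Real.cosh (Real.arsinh (-B / C)) = A / C := by
    rw [Real.cosh_arsinh]
    have h3 : 1 + (-B / C) ^ 2 = (A / C) ^ 2 := by
      field_simp
      linear_combination hC2
    rw [h3, Real.sqrt_sq (by positivity)]
  have hsinh₀ : Real.sinh (Real.arsinh (-B / C)) = -B / C := Real.sinh_arsinh _
  intro s
  have hF : Real.cosh (dist k (γ s)) = Real.cosh s * A + Real.sinh s * B := by
    obtain ⟨h0, h1, h2⟩ := struct s
    have hBdiv : Real.sinh 1 * B = Bn := by rw [hB]; field_simp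
    have key : Real.sinh 1 * Real.cosh (dist k (γ s))
        = Real.sinh 1 * (Real.cosh s * A + Real.sinh s * B) := by
      linear_combination ph0 k * h0 - ph1 k * h1 - ph2 k * h2
        - Real.sinh 1 * (ph_Q k (γ s)) - Real.sinh 1 * Real.cosh s * hA
        - Real.sinh s * hBn - Real.sinh s * hBdiv
    exact mul_left_cancel₀ hs1' key
  rw [Real.cosh_sub, hcosh₀, hsinh₀, hF]
  field_simp
  ring

lemma le_dist_of_cosh_le {d r : ℝ} (hd : 0 ≤ d) (h : Real.cosh r ≤ Real.cosh d) : |r| ≤ d := by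
  have := Real.cosh_le_cosh.1 h
  rwa [abs_of_nonneg hd] at this

lemma lt_dist_of_cosh_lt {d r : ℝ} (hd : 0 ≤ d) (h : Real.cosh r < Real.cosh d) : |r| < d := by
  have := Real.cosh_lt_cosh.1 h
  rwa [abs_of_nonneg hd] at this

lemma abs_add_abs_eq {a b t : ℝ} (h1 : |a - t| ≤ |a - b|) (h2 : |t - b| ≤ |a - b|) :
    |a - t| + |t - b| = |a - b| := by
  rcases abs_cases (a - t) with ⟨e1, f1⟩ | ⟨e1, f1⟩ <;>
    rcases abs_cases (t - b) with ⟨e2, f2⟩ | ⟨e2, f2⟩ <;>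
      rcases abs_cases (a - b) with ⟨e3, f3⟩ | ⟨e3, f3⟩ <;> linarith

/-- **Remark.** A diameter of a convex body lies on a double normal: if `x, y ∈ K` realize
the diameter and `Γ` is the geodesic line through `x` and `y`, then `Γ` is a double normal
of `K` with `P_Γ(K) = K ∩ Γ = [x, y]`. In particular, every convex body has a double
normal. -/
theorem diameter_is_doubleNormal (K Γ : Set ℍ) (x y : ℍ)
    (hK : IsConvexBody K) (hx : x ∈ K) (hy : y ∈ K)
    (hd : dist x y = Metric.diam K)
    (hΓ : IsGeodesicLine Γ) (hxΓ : x ∈ Γ) (hyΓ : y ∈ Γ) :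
    IsDoubleNormal K Γ ∧ Proj Γ K = K ∩ Γ ∧ K ∩ Γ = Seg x y ∧
      ∃ Γ' : Set ℍ, IsGeodesicLine Γ' ∧ IsDoubleNormal K Γ' := by 
  obtain ⟨γ, hγ, rfl⟩ := hΓ
  obtain ⟨a, ha⟩ := hxΓ
  obtain ⟨b, hb⟩ := hyΓ
  have hbd : Bornology.IsBounded K := hK.1.isBounded
  have hdiam : ∀ p ∈ K, ∀ q ∈ K, dist p q ≤ dist x y := by
    intro p hp q hq
    rw [hd]
    exact dist_le_diam_of_mem hbd hp hq
  have hab : dist x y = |a - b| := by rw [← ha, ← hb, hγ a b]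
  have hdistx : ∀ t, dist x (γ t) = |a - t| := fun t => by rw [← ha, hγ a t]
  have hdisty : ∀ t, dist (γ t) y = |t - b| := fun t => by rw [← hb, hγ t b]
  -- K ∩ Γ ⊆ Seg x y
  have claim1 : K ∩ Set.range γ ⊆ Seg x y := by
    rintro p ⟨hpK, t, rfl⟩
    have h1 : |a - t| ≤ |a - b| := by
      rw [← hdistx t, ← hab]; exact hdiam x hx (γ t) hpK
    have h2 : |t - b| ≤ |a - b| := by
      rw [← hdisty t, ← hab]; exact hdiam (γ t) hpK y hy
    show dist x (γ t) + dist (γ t) y = dist x y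
    rw [hdistx t, hdisty t, hab]
    exact abs_add_abs_eq h1 h2
  -- Seg x y ⊆ K
  have claim2 : Seg x y ⊆ K := hK.2.1 hx hy
  -- Seg x y ⊆ Γ
  have claim3 : Seg x y ⊆ Set.range γ := by
    intro z hz
    have hz' : dist x z + dist z y = dist x y := hz
    obtain ⟨C, s₀, hC1, hform⟩ := geodesic_cosh_dist γ hγ z
    have hdzx : Real.cosh (dist z x) = C * Real.cosh (a - s₀) := by
      rw [← ha]; exact hform a
    have hdzy : Real.cosh (dist z y) = C * Real.cosh (b - s₀) := by
      rw [← hb]; exact hform b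
    have htri : |a - b| ≤ |a - s₀| + |b - s₀| := by
      have := abs_sub_le a s₀ b
      rw [abs_sub_comm s₀ b] at this
      exact this
    have hCeq : C = 1 := by
      by_contra hne
      have hClt : 1 < C := lt_of_le_of_ne hC1 (Ne.symm hne)
      have h1 : |a - s₀| < dist z x := by
        refine lt_dist_of_cosh_lt dist_nonneg ?_
        rw [hdzx]
        nlinarith [Real.one_le_cosh (a - s₀)]
      have h2 : |b - s₀| < dist z y := by
        refine lt_dist_of_cosh_lt dist_nonneg ?_
        rw [hdzy]
        nlinarith [Real.one_le_cosh (b - s₀)]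
      rw [dist_comm z x] at h1
      have : dist x y < dist x z + dist z y := by
        calc dist x y = |a - b| := hab
        _ ≤ |a - s₀| + |b - s₀| := htri
        _ < dist x z + dist z y := by linarith
      linarith [hz']
    have : Real.cosh (dist z (γ s₀)) = 1 := by
      rw [hform s₀, hCeq, sub_self, Real.cosh_zero, one_mul]
    have hdz0 : dist z (γ s₀) = 0 := by
      by_contra hne
      have := Real.one_lt_cosh.2 hne
      linarith
    exact ⟨s₀, (dist_eq_zero.1 hdz0).symm⟩
  -- Proj ⊆ K ∩ Γ
  have claim4 : Proj (Set.range γ) K ⊆ K ∩ Set.range γ := by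
    rintro p ⟨⟨t, rfl⟩, k, hkK, hmin⟩
    refine ⟨?_, ⟨t, rfl⟩⟩
    obtain ⟨C, s₀, hC1, hform⟩ := geodesic_cosh_dist γ hγ k
    have hCpos : (0:ℝ) < C := lt_of_lt_of_le one_pos hC1
    have hts : t = s₀ := by
      have h1 : dist k (γ t) ≤ dist k (γ s₀) := by
        rw [hmin]; exact infDist_le_dist_of_mem ⟨s₀, rfl⟩
      have h2 : Real.cosh (dist k (γ t)) ≤ Real.cosh (dist k (γ s₀)) :=
        Real.cosh_le_cosh.2 (by rw [abs_of_nonneg dist_nonneg, abs_of_nonneg dist_nonneg]; exact h1)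
      rw [hform t, hform s₀, sub_self, Real.cosh_zero, mul_one] at h2
      have h3 : Real.cosh (t - s₀) ≤ 1 := by
        nlinarith
      have : t - s₀ = 0 := by
        by_contra hne
        have := Real.one_lt_cosh.2 hne
        linarith
      linarith [this]
    have hax : |a - t| ≤ |a - b| := by
      have h1 : Real.cosh (a - t) ≤ Real.cosh (dist k (γ a)) := by
        rw [hform a, hts]
        nlinarith [Real.one_le_cosh (a - s₀), Real.cosh_pos (a - s₀)]
      have h2 := le_dist_of_cosh_le dist_nonneg h1
      calc |a - t| ≤ dist k (γ a) := h2
        _ ≤ dist x y := by rw [ha]; exact hdiam k hkK x hx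
        _ = |a - b| := hab
    have hbx : |t - b| ≤ |a - b| := by
      have h1 : Real.cosh (b - t) ≤ Real.cosh (dist k (γ b)) := by
        rw [hform b, hts]
        nlinarith [Real.one_le_cosh (b - s₀), Real.cosh_pos (b - s₀)]
      have h2 := le_dist_of_cosh_le dist_nonneg h1
      calc |t - b| = |b - t| := abs_sub_comm t b
        _ ≤ dist k (γ b) := h2
        _ ≤ dist x y := by rw [hb]; exact hdiam k hkK y hy
        _ = |a - b| := hab
    refine claim2 ?_
    show dist x (γ t) + dist (γ t) y = dist x y
    rw [hdistx t, hdisty t, hab]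
    exact abs_add_abs_eq hax hbx
  -- K ∩ Γ ⊆ Proj
  have claim5 : K ∩ Set.range γ ⊆ Proj (Set.range γ) K := by
    rintro p ⟨hpK, hpΓ⟩
    exact ⟨hpΓ, p, hpK, by rw [dist_self, infDist_zero_of_mem hpΓ]⟩
  have hproj : Proj (Set.range γ) K = K ∩ Set.range γ := Subset.antisymm claim4 claim5
  have hseg : K ∩ Set.range γ = Seg x y :=
    Subset.antisymm claim1 (fun z hz => ⟨claim2 hz, claim3 hz⟩)
  have hdn : IsDoubleNormal K (Set.range γ) := ⟨⟨x, hx, ⟨a, ha⟩⟩, hproj⟩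
  exact ⟨hdn, hproj, hseg, Set.range γ, ⟨γ, hγ, rfl⟩, hdn⟩
end

section
/- Let K be a C¹-smooth convex body in the hyperbolic plane ℍ. Then the supremum over all frontier points x of K and all geodesic lines Γ normal to K at x of the projection length Metric.diam (P_Γ(K)) equals the diameter Metric.diam K, and this supremum is attained. -/
open scoped UpperHalfPlane
open Set Metric

section AuxHyperbolic

open scoped MatrixGroups
open Bornology

set_option maxHeartbeats 1000000

noncomputable def vpt (s : ℝ) : ℍ := UpperHalfPlane.mk ⟨0, Real.exp s⟩ (Real.exp_pos s)

@[simp] lemma vpt_re (s : ℝ) : (vpt s).re = 0 := rfl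
@[simp] lemma vpt_im (s : ℝ) : (vpt s).im = Real.exp s := rfl

lemma vpt_dist (s t : ℝ) : dist (vpt s) (vpt t) = |s - t| := by
  rw [UpperHalfPlane.dist_of_re_eq (show (vpt s).re = (vpt t).re from rfl)]
  simp [Real.dist_eq]

lemma cosh_dist_vpt (z : ℍ) (t : ℝ) :
    Real.cosh (dist z (vpt t)) =
      (z.re ^ 2 + z.im ^ 2 + Real.exp t ^ 2) / (2 * z.im * Real.exp t) := by
  rw [UpperHalfPlane.cosh_dist, Complex.dist_eq_re_im, Real.sq_sqrt (by positivity)]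
  have h1 : (0:ℝ) < z.im := z.im_pos
  have h2 : (0:ℝ) < Real.exp t := Real.exp_pos t
  have hre : ((vpt t : ℍ) : ℂ).re = 0 := rfl
  have him : ((vpt t : ℍ) : ℂ).im = Real.exp t := rfl
  rw [hre, him, UpperHalfPlane.coe_re, UpperHalfPlane.coe_im]
  have : (vpt t).im = Real.exp t := rfl
  rw [this]
  field_simp
  ring

lemma vpt_unique {z : ℍ} {s h : ℝ} (hh : h ≠ 0)
    (h0 : dist (vpt 0) z = |s|) (hh2 : dist (vpt h) z = |s - h|) : z = vpt s := by
  have hy : (0:ℝ) < z.im := z.im_pos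
  have hapos : 0 < Real.exp s := Real.exp_pos s
  have hbpos : 0 < Real.exp h := Real.exp_pos h
  have e1 : (z.re ^ 2 + z.im ^ 2 + 1) * Real.exp s = z.im * (Real.exp s ^ 2 + 1) := by
    have hc := cosh_dist_vpt z 0
    rw [dist_comm, h0, Real.cosh_abs, Real.cosh_eq, Real.exp_neg, Real.exp_zero] at hc
    field_simp at hc
    linear_combination -hc
  have e2 : (z.re ^ 2 + z.im ^ 2 + Real.exp h ^ 2) * (Real.exp s * Real.exp h) =
      z.im * Real.exp h * (Real.exp s ^ 2 + Real.exp h ^ 2) := by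
    have hc := cosh_dist_vpt z h
    rw [dist_comm, hh2, Real.cosh_abs, Real.cosh_eq, Real.exp_sub, neg_sub, Real.exp_sub] at hc
    field_simp at hc
    linear_combination -(Real.exp h) * hc
  have hb1 : Real.exp h ≠ 1 := by
    intro hcon; exact hh (Real.exp_injective (hcon.trans Real.exp_zero.symm))
  have key : (Real.exp h ^ 2 - 1) * (Real.exp s - z.im) = 0 := by
    have key' : Real.exp h * ((Real.exp h ^ 2 - 1) * (Real.exp s - z.im)) = 0 := by
      linear_combination e2 - Real.exp h * e1
    rcases mul_eq_zero.1 key' with h' | h'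
    · exact absurd h' (ne_of_gt hbpos)
    · exact h'
  have hb2 : Real.exp h ^ 2 - 1 ≠ 0 := by
    intro hcon
    have : Real.exp h = 1 := by nlinarith
    exact hb1 this
  have hya : z.im = Real.exp s := by
    rcases mul_eq_zero.1 key with h' | h'
    · exact absurd h' hb2
    · linarith
  have hx0 : z.re = 0 := by
    rw [hya] at e1
    have hsq : z.re ^ 2 * Real.exp s = 0 := by linear_combination e1
    rcases mul_eq_zero.1 hsq with h' | h'
    · exact pow_eq_zero_iff two_ne_zero |>.mp h'
    · exact absurd h' (ne_of_gt hapos)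
  exact UpperHalfPlane.ext' (by simp [hx0]) (by simp [hya])

lemma cosh_dist_vpt' (k : ℍ) (t : ℝ) :
    Real.cosh (dist k (vpt t)) =
      (Real.sqrt (k.re ^ 2 + k.im ^ 2) / k.im) *
        Real.cosh (t - Real.log (Real.sqrt (k.re ^ 2 + k.im ^ 2))) := by
  set R := Real.sqrt (k.re ^ 2 + k.im ^ 2) with hR
  have hkim : (0:ℝ) < k.im := k.im_pos
  have hRpos : 0 < R := Real.sqrt_pos.mpr (by positivity)
  have hR2 : R ^ 2 = k.re ^ 2 + k.im ^ 2 := Real.sq_sqrt (by positivity)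
  rw [cosh_dist_vpt, Real.cosh_eq, Real.exp_sub, Real.exp_neg, Real.exp_sub, Real.exp_log hRpos]
  have het : (0:ℝ) < Real.exp t := Real.exp_pos t
  field_simp
  linear_combination -hR2

lemma vpt_nearest (k : ℍ) (t₀ : ℝ)
    (h : dist k (vpt t₀) = infDist k (Set.range vpt)) (t : ℝ) :
    dist (vpt t₀) (vpt t) ≤ dist k (vpt t) := by
  set R := Real.sqrt (k.re ^ 2 + k.im ^ 2) with hR
  set σ := Real.log R with hσ
  have hkim : (0:ℝ) < k.im := k.im_pos
  have hRpos : 0 < R := Real.sqrt_pos.mpr (by positivity)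
  have hR2 : R ^ 2 = k.re ^ 2 + k.im ^ 2 := Real.sq_sqrt (by positivity)
  have hRb : k.im ≤ R := by
    nlinarith [sq_nonneg k.re, hkim, hRpos]
  -- t₀ = σ
  have h1 : dist k (vpt t₀) ≤ dist k (vpt σ) := by
    rw [h]; exact infDist_le_dist_of_mem (mem_range_self σ)
  have h2 : Real.cosh (dist k (vpt t₀)) ≤ Real.cosh (dist k (vpt σ)) := by
    rw [Real.cosh_le_cosh, abs_of_nonneg dist_nonneg, abs_of_nonneg dist_nonneg]
    exact h1
  rw [cosh_dist_vpt', cosh_dist_vpt'] at h2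
  rw [← hR, ← hσ] at h2
  have h3 : Real.cosh (t₀ - σ) ≤ Real.cosh (σ - σ) := by
    have hpos : 0 < R / k.im := by positivity
    exact le_of_mul_le_mul_left (by simpa [mul_comm] using h2) hpos
  have ht0 : t₀ = σ := by
    rw [sub_self] at h3
    have h5 := Real.cosh_le_cosh.mp h3
    have h0 : |t₀ - σ| ≤ 0 := by simpa using h5
    have h6 : t₀ - σ = 0 := abs_eq_zero.mp (le_antisymm h0 (abs_nonneg _))
    linarith
  -- conclude
  have hco : Real.cosh (dist (vpt t₀) (vpt t)) ≤ Real.cosh (dist k (vpt t)) := by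
    rw [vpt_dist, Real.cosh_abs, cosh_dist_vpt', ← hR, ← hσ, ht0]
    have hc1 : (1:ℝ) ≤ R / k.im := (one_le_div hkim).mpr hRb
    have hcpos : 0 < Real.cosh (t - σ) := Real.cosh_pos _
    calc Real.cosh (σ - t) = Real.cosh (t - σ) := by
          rw [← Real.cosh_abs, abs_sub_comm, Real.cosh_abs]
      _ = 1 * Real.cosh (t - σ) := (one_mul _).symm
      _ ≤ (R / k.im) * Real.cosh (t - σ) := by
          exact mul_le_mul_of_nonneg_right hc1 hcpos.le
  have := Real.cosh_le_cosh.mp hco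
  rwa [abs_of_nonneg dist_nonneg, abs_of_nonneg dist_nonneg] at this

-- translation matrix
noncomputable def mT (a : ℝ) : SL(2,ℝ) :=
  ⟨!![1, a; 0, 1], by simp [Matrix.det_fin_two_of]⟩

noncomputable def mD (u : ℝ) (hu : 0 < u) : SL(2,ℝ) :=
  ⟨!![Real.sqrt u, 0; 0, (Real.sqrt u)⁻¹], by
    have : Real.sqrt u ≠ 0 := ne_of_gt (Real.sqrt_pos.mpr hu)
    simp [Matrix.det_fin_two_of]
    field_simp⟩

noncomputable def mS : SL(2,ℝ) := ⟨!![0, -1; 1, 0], by simp [Matrix.det_fin_two_of]⟩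

lemma smul_coe (g : SL(2,ℝ)) (z : ℍ) :
    ((g • z : ℍ) : ℂ) = ((g : Matrix (Fin 2) (Fin 2) ℝ) 0 0 * z + (g : Matrix (Fin 2) (Fin 2) ℝ) 0 1) /
      ((g : Matrix (Fin 2) (Fin 2) ℝ) 1 0 * z + (g : Matrix (Fin 2) (Fin 2) ℝ) 1 1) := by
  rw [UpperHalfPlane.specialLinearGroup_apply]
  simp

example (a : ℝ) (z : ℍ) : ((mT a • z : ℍ) : ℂ) = (z : ℂ) + a := by
  rw [smul_coe]
  simp [mT]

lemma mT_coe (a : ℝ) (z : ℍ) : ((mT a • z : ℍ) : ℂ) = (z : ℂ) + a := by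
  rw [smul_coe]; simp [mT]

lemma mD_coe (u : ℝ) (hu : 0 < u) (z : ℍ) : ((mD u hu • z : ℍ) : ℂ) = (u : ℂ) * z := by
  rw [smul_coe]
  have h1 : Real.sqrt u ≠ 0 := ne_of_gt (Real.sqrt_pos.mpr hu)
  have h2 : (Real.sqrt u : ℂ) * Real.sqrt u = u := by
    norm_cast
    exact Real.mul_self_sqrt hu.le
  simp [mD]
  rw [← h2]
  ring

lemma mS_coe (z : ℍ) : ((mS • z : ℍ) : ℂ) = -1 / z := by
  rw [smul_coe]; simp [mS]

lemma mS_vpt (a : ℝ) : mS • vpt a = vpt (-a) := by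
  apply UpperHalfPlane.ext
  rw [mS_coe]
  have h1 : (vpt a : ℂ) = ⟨0, Real.exp a⟩ := rfl
  have h2 : (vpt (-a) : ℂ) = ⟨0, Real.exp (-a)⟩ := rfl
  rw [h1, h2]
  apply Complex.ext <;>
    simp [Complex.div_re, Complex.div_im, Complex.normSq_apply, Real.exp_neg] <;>
    field_simp

lemma constSMul_apply (g : SL(2,ℝ)) (z : ℍ) : (IsometryEquiv.constSMul g : ℍ ≃ᵢ ℍ) z = g • z := rfl

lemma re_helper (z : ℍ) (c r : ℝ) (hr : 0 < r)
    (hz : (z.re - c) ^ 2 + z.im ^ 2 = r ^ 2) :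
    (mS • (mT (-(c + r)) • z) : ℍ).re = 1 / (2 * r) := by
  set w : ℂ := (z : ℂ) - (c + r) with hw
  have hwim : w.im = z.im := by simp [hw, UpperHalfPlane.coe_im]
  have hwre : w.re = z.re - (c + r) := by simp [hw, UpperHalfPlane.coe_re]
  have hwne : w ≠ 0 := by
    intro h0
    have := z.im_pos
    rw [h0] at hwim; simp at hwim; linarith
  have hcoe : ((mS • (mT (-(c + r)) • z) : ℍ) : ℂ) = -1 / w := by
    rw [mS_coe, mT_coe]
    push_cast
    rw [hw]
    ring_nf
  have hnq : Complex.normSq w = 2 * r * (c + r - z.re) := by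
    rw [Complex.normSq_apply, hwre, hwim]
    linear_combination hz
  have hnqpos : 0 < Complex.normSq w := Complex.normSq_pos.mpr hwne
  have hden : 0 < c + r - z.re := by nlinarith
  have : (mS • (mT (-(c + r)) • z) : ℍ).re = (-1 / w).re := by
    rw [← UpperHalfPlane.coe_re, hcoe]
  rw [this]
  have : (-1 / w) = -(w⁻¹) := by ring
  rw [this, Complex.neg_re, Complex.inv_re, hnq, hwre]
  field_simp
  ring

lemma step1 (x y : ℍ) : ∃ f : ℍ ≃ᵢ ℍ, (f x).re = (f y).re := by
  by_cases hre : x.re = y.re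
  · exact ⟨IsometryEquiv.refl ℍ, hre⟩
  · set c : ℝ := (x.re ^ 2 + x.im ^ 2 - y.re ^ 2 - y.im ^ 2) / (2 * (x.re - y.re)) with hc
    have hne : x.re - y.re ≠ 0 := sub_ne_zero.mpr hre
    have hkey : (x.re - c) ^ 2 + x.im ^ 2 = (y.re - c) ^ 2 + y.im ^ 2 := by
      have hc2 : c * (2 * (x.re - y.re)) = x.re ^ 2 + x.im ^ 2 - y.re ^ 2 - y.im ^ 2 := by
        rw [hc]; exact div_mul_cancel₀ _ (mul_ne_zero two_ne_zero hne)
      field_simp [hc]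
      linear_combination -hc2
    set r : ℝ := Real.sqrt ((x.re - c) ^ 2 + x.im ^ 2) with hrdef
    have hrpos : 0 < r := Real.sqrt_pos.mpr (by positivity)
    have hr2 : r ^ 2 = (x.re - c) ^ 2 + x.im ^ 2 := Real.sq_sqrt (by positivity)
    refine ⟨(IsometryEquiv.constSMul (mT (-(c + r)))).trans (IsometryEquiv.constSMul mS), ?_⟩
    rw [IsometryEquiv.trans_apply, IsometryEquiv.trans_apply,
      constSMul_apply, constSMul_apply, constSMul_apply, constSMul_apply]
    rw [re_helper x c r hrpos hr2.symm, re_helper y c r hrpos (by rw [← hkey, hr2])]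

lemma step2 (x y : ℍ) (hre : x.re = y.re) (hxy : x ≠ y) :
    ∃ f : ℍ ≃ᵢ ℍ, f x = vpt 0 ∧ f y = vpt (dist x y) := by
  have hxim : 0 < x.im := x.im_pos
  have hyim : 0 < y.im := y.im_pos
  set f1 : ℍ ≃ᵢ ℍ := (IsometryEquiv.constSMul (mT (-x.re))).trans
    (IsometryEquiv.constSMul (mD (x.im)⁻¹ (by positivity))) with hf1
  have hf1x : f1 x = vpt 0 := by
    apply UpperHalfPlane.ext
    rw [hf1, IsometryEquiv.trans_apply, constSMul_apply, constSMul_apply, mD_coe, mT_coe]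
    have : (vpt 0 : ℂ) = ⟨0, 1⟩ := by
      have : (vpt 0 : ℂ) = ⟨0, Real.exp 0⟩ := rfl
      rw [this]; norm_num
    rw [this]
    apply Complex.ext <;> simp [UpperHalfPlane.coe_re, UpperHalfPlane.coe_im] <;> field_simp
  have hf1y : f1 y = vpt (Real.log (y.im / x.im)) := by
    apply UpperHalfPlane.ext
    rw [hf1, IsometryEquiv.trans_apply, constSMul_apply, constSMul_apply, mD_coe, mT_coe]
    have : (vpt (Real.log (y.im / x.im)) : ℂ) = ⟨0, y.im / x.im⟩ := by
      have h1 : (vpt (Real.log (y.im / x.im)) : ℂ) = ⟨0, Real.exp (Real.log (y.im / x.im))⟩ := rfl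
      rw [h1, Real.exp_log (by positivity)]
    rw [this]
    apply Complex.ext <;> simp [UpperHalfPlane.coe_re, UpperHalfPlane.coe_im, ← hre] <;> field_simp
  set t : ℝ := Real.log (y.im / x.im) with ht
  have hd : dist x y = |t| := by
    rw [← f1.dist_eq x y, hf1x, hf1y, vpt_dist]
    simp
  rcases le_or_gt 0 t with h0 | h0
  · exact ⟨f1, hf1x, by rw [hd, abs_of_nonneg h0, hf1y]⟩
  · refine ⟨f1.trans (IsometryEquiv.constSMul mS), ?_, ?_⟩
    · rw [IsometryEquiv.trans_apply, hf1x, constSMul_apply, mS_vpt, neg_zero]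
    · rw [IsometryEquiv.trans_apply, hf1y, constSMul_apply, mS_vpt, hd, abs_of_neg h0]

lemma pair_std (x y : ℍ) (hxy : x ≠ y) :
    ∃ f : ℍ ≃ᵢ ℍ, f x = vpt 0 ∧ f y = vpt (dist x y) := by
  obtain ⟨f0, hf0⟩ := step1 x y
  have hne : f0 x ≠ f0 y := fun h => hxy (f0.injective h)
  obtain ⟨f2, h2x, h2y⟩ := step2 (f0 x) (f0 y) hf0 hne
  refine ⟨f0.trans f2, by rw [IsometryEquiv.trans_apply, h2x], ?_⟩
  rw [IsometryEquiv.trans_apply, h2y, f0.dist_eq]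

lemma vpt_param : IsGeodesicParam vpt := vpt_dist

lemma geodesic_param_eq {γ : ℝ → ℍ} (hγ : IsGeodesicParam γ) :
    ∃ f : ℍ ≃ᵢ ℍ, ∀ s, γ s = f (vpt s) := by
  have hd : dist (γ 0) (γ 1) = 1 := by rw [hγ]; norm_num
  have hne : γ 0 ≠ γ 1 := by
    intro h
    rw [h, dist_self] at hd; norm_num at hd
  obtain ⟨f, hf0, hf1⟩ := pair_std (γ 0) (γ 1) hne
  rw [hd] at hf1
  refine ⟨f.symm, fun s => ?_⟩
  have h0 : dist (vpt 0) (f (γ s)) = |s| := by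
    rw [← hf0, f.dist_eq, hγ]
    simp [abs_sub_comm]
  have h1 : dist (vpt 1) (f (γ s)) = |s - 1| := by
    rw [← hf1, f.dist_eq, hγ]
    simp [abs_sub_comm]
  have := vpt_unique one_ne_zero h0 h1
  rw [← this, IsometryEquiv.symm_apply_apply]

lemma nearest_contract {γ : ℝ → ℍ} (hγ : IsGeodesicParam γ) (k : ℍ) (t₀ : ℝ)
    (h : dist k (γ t₀) = infDist k (Set.range γ)) (t : ℝ) :
    dist (γ t₀) (γ t) ≤ dist k (γ t) := by
  obtain ⟨f, hf⟩ := geodesic_param_eq hγ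
  have hrange : Set.range γ = f '' Set.range vpt := by
    ext z
    constructor
    · rintro ⟨s, rfl⟩; exact ⟨vpt s, mem_range_self s, (hf s).symm⟩
    · rintro ⟨w, ⟨s, rfl⟩, rfl⟩; exact ⟨s, hf s⟩
  have hdist : ∀ s, dist k (γ s) = dist (f.symm k) (vpt s) := fun s => by
    rw [hf s, ← f.symm.dist_eq, IsometryEquiv.symm_apply_apply]
  have hinf : infDist k (Set.range γ) = infDist (f.symm k) (Set.range vpt) := by
    rw [hrange, ← f.apply_symm_apply k, infDist_image f.isometry, f.symm_apply_apply]
  have hnear : dist (f.symm k) (vpt t₀) = infDist (f.symm k) (Set.range vpt) := by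
    rw [← hdist, h, hinf]
  have := vpt_nearest (f.symm k) t₀ hnear t
  calc dist (γ t₀) (γ t) = dist (vpt t₀) (vpt t) := by rw [hγ, vpt_dist]
    _ ≤ dist (f.symm k) (vpt t) := this
    _ = dist k (γ t) := (hdist t).symm

end AuxHyperbolic

open Bornology

set_option maxHeartbeats 1000000 in
/-- **Lemma.** For a `C¹`-smooth convex body `K`, the maximum of the projection lengths over
all geodesic lines normal to `K` at frontier points equals the diameter of `K`, and it is
attained. -/
theorem max_width_eq_diam (K : Set ℍ) (hK : IsConvexBody K) (hsm : IsC1Smooth K) :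
    IsGreatest {d : ℝ | ∃ (x : ℍ) (Γ : Set ℍ), IsGeodesicLine Γ ∧ IsNormalAt K Γ x ∧
      d = Metric.diam (Proj Γ K)} (Metric.diam K) := by
  obtain ⟨hcomp, -, hint⟩ := hK
  have hclosed : IsClosed K := hcomp.isClosed
  have hbdd : IsBounded K := hcomp.isBounded
  have hKsub : frontier K ⊆ K := hclosed.frontier_subset
  -- diameter is positive
  have dpos : 0 < Metric.diam K := by
    obtain ⟨z, hz⟩ := hint
    obtain ⟨ε, hε, hball⟩ := Metric.mem_nhds_iff.mp (mem_interior_iff_mem_nhds.mp hz)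
    have hzK : z ∈ K := interior_subset hz
    set w : ℍ := UpperHalfPlane.mk ⟨z.re, z.im * Real.exp (ε/2)⟩
      (by have := z.im_pos; have := Real.exp_pos (ε/2); positivity) with hw
    have hdzw : dist z w = ε / 2 := by
      rw [UpperHalfPlane.dist_of_re_eq (show z.re = w.re from rfl)]
      have hwim : w.im = z.im * Real.exp (ε/2) := rfl
      rw [hwim, Real.log_mul (ne_of_gt z.im_pos) (ne_of_gt (Real.exp_pos _)), Real.log_exp,
        Real.dist_eq]
      rw [abs_of_nonpos (by linarith)]
      ring
    have hwK : w ∈ K := hball (by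
      rw [Metric.mem_ball, dist_comm, hdzw]; linarith)
    calc (0:ℝ) < ε / 2 := by linarith
      _ = dist z w := hdzw.symm
      _ ≤ Metric.diam K := dist_le_diam_of_mem hbdd hzK hwK
  -- diameter attained
  obtain ⟨x, y, hxK, hyK, hxy⟩ : ∃ x y, x ∈ K ∧ y ∈ K ∧ dist x y = Metric.diam K := by
    have hne : (K ×ˢ K).Nonempty := by
      obtain ⟨z, hz⟩ := hint
      exact ⟨(z, z), ⟨interior_subset hz, interior_subset hz⟩⟩
    obtain ⟨⟨x, y⟩, hmem, hmax⟩ := (hcomp.prod hcomp).exists_isMaxOn hne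
      (continuous_dist.continuousOn)
    refine ⟨x, y, hmem.1, hmem.2, le_antisymm (dist_le_diam_of_mem hbdd hmem.1 hmem.2) ?_⟩
    exact Metric.diam_le_of_forall_dist_le dist_nonneg
      (fun a ha b hb => isMaxOn_iff.1 hmax (a, b) (Set.mk_mem_prod ha hb))
  set d : ℝ := Metric.diam K with hd
  have hxyne : x ≠ y := by
    intro h
    rw [h, dist_self] at hxy
    exact absurd hxy.symm (ne_of_gt dpos)
  -- geodesic through x, y
  obtain ⟨f, hfx, hfy⟩ := pair_std x y hxyne
  rw [hxy] at hfy
  set γ : ℝ → ℍ := fun s => f.symm (vpt s) with hγdef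
  have hγ : IsGeodesicParam γ := fun s t => by
    rw [hγdef]; simp only []
    rw [f.symm.dist_eq, vpt_dist]
  have hγ0 : γ 0 = x := by rw [hγdef]; simp only []; rw [← hfx, f.symm_apply_apply]
  have hγd : γ d = y := by rw [hγdef]; simp only []; rw [← hfy, f.symm_apply_apply]
  set Γ : Set ℍ := Set.range γ with hΓ
  -- projection lies in [0, d]
  have hproj : ∀ p ∈ Proj Γ K, ∃ t, t ∈ Set.Icc 0 d ∧ γ t = p := by
    rintro p ⟨⟨t, rfl⟩, k, hkK, hk⟩
    have h1 : dist (γ t) (γ 0) ≤ dist k (γ 0) := nearest_contract hγ k t hk 0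
    have h2 : dist (γ t) (γ d) ≤ dist k (γ d) := nearest_contract hγ k t hk d
    rw [hγ, hγ0] at h1
    rw [hγ, hγd] at h2
    have hk1 : dist k x ≤ d := dist_le_diam_of_mem hbdd hkK hxK
    have hk2 : dist k y ≤ d := dist_le_diam_of_mem hbdd hkK hyK
    have e1 : |t| ≤ d := by simpa using h1.trans hk1
    have e2 : |t - d| ≤ d := h2.trans hk2
    rw [abs_le] at e1 e2
    exact ⟨t, ⟨by linarith, by linarith⟩, rfl⟩
  have hxmem : x ∈ Proj Γ K := by
    refine ⟨⟨0, hγ0⟩, x, hxK, ?_⟩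
    rw [dist_self, Metric.infDist_zero_of_mem (show x ∈ Γ from ⟨0, hγ0⟩)]
  have hymem : y ∈ Proj Γ K := by
    refine ⟨⟨d, hγd⟩, y, hyK, ?_⟩
    rw [dist_self, Metric.infDist_zero_of_mem (show y ∈ Γ from ⟨d, hγd⟩)]
  have hdiamle : ∀ p1 ∈ Proj Γ K, ∀ p2 ∈ Proj Γ K, dist p1 p2 ≤ d := by
    intro p1 h1 p2 h2
    obtain ⟨t1, ht1, rfl⟩ := hproj p1 h1
    obtain ⟨t2, ht2, rfl⟩ := hproj p2 h2
    rw [hγ, abs_le]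
    constructor <;> [linarith [ht1.1, ht1.2, ht2.1, ht2.2]; linarith [ht1.1, ht1.2, ht2.1, ht2.2]]
  have hprojbdd : IsBounded (Proj Γ K) := Metric.isBounded_iff.mpr ⟨d, hdiamle⟩
  have hdiam : Metric.diam (Proj Γ K) = d := by
    refine le_antisymm (Metric.diam_le_of_forall_dist_le dpos.le hdiamle) ?_
    calc d = dist x y := hxy.symm
      _ ≤ Metric.diam (Proj Γ K) := dist_le_diam_of_mem hprojbdd hxmem hymem
  -- x is a frontier point
  have hxfr : x ∈ frontier K := by
    have hnotint : x ∉ interior K := by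
      intro hx
      obtain ⟨ε, hε, hball⟩ := Metric.mem_nhds_iff.mp (mem_interior_iff_mem_nhds.mp hx)
      have hq : γ (-(ε/2)) ∈ K := hball (by
        rw [Metric.mem_ball, ← hγ0, hγ]
        rw [show |(-(ε/2)) - 0| = ε/2 by rw [sub_zero, abs_neg, abs_of_nonneg (by linarith)]]
        linarith)
      have : dist (γ (-(ε/2))) y ≤ d := dist_le_diam_of_mem hbdd hq hyK
      rw [← hγd, hγ] at this
      rw [show |(-(ε/2)) - d| = ε/2 + d by
        rw [abs_of_nonpos (by linarith [dpos])]; ring] at this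
      linarith
    rw [frontier, hclosed.closure_eq]
    exact ⟨hxK, hnotint⟩
  constructor
  · -- membership
    refine ⟨x, Γ, ⟨γ, hγ, rfl⟩, ⟨hxfr, γ, hγ, rfl, 0, hγ0, Or.inl ?_⟩, hdiam.symm⟩
    intro p hp
    obtain ⟨t, ht, rfl⟩ := hproj p hp
    exact ⟨t, ht.1, rfl⟩
  · -- upper bound
    rintro e ⟨x', Γ', -, ⟨hx'fr, γ', hγ', rfl, s₀, hγs₀, hside⟩, rfl⟩
    have hx'K : x' ∈ K := hKsub hx'fr
    have hb : ∀ p ∈ Proj (Set.range γ') K, dist p x' ≤ d := by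
      rintro p ⟨⟨t, rfl⟩, k, hkK, hk⟩
      calc dist (γ' t) x' = dist (γ' t) (γ' s₀) := by rw [hγs₀]
        _ ≤ dist k (γ' s₀) := nearest_contract hγ' k t hk s₀
        _ = dist k x' := by rw [hγs₀]
        _ ≤ d := dist_le_diam_of_mem hbdd hkK hx'K
    refine Metric.diam_le_of_forall_dist_le dpos.le ?_
    intro p1 h1 p2 h2
    rcases hside with hside | hside
    · obtain ⟨t1, ht1, hp1⟩ := hside h1
      obtain ⟨t2, ht2, hp2⟩ := hside h2
      have hb1 : |t1 - s₀| ≤ d := by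
        rw [← hγ' t1 s₀, hγs₀, hp1]; exact hb p1 h1
      have hb2 : |t2 - s₀| ≤ d := by
        rw [← hγ' t2 s₀, hγs₀, hp2]; exact hb p2 h2
      have a1 := abs_le.mp hb1
      have a2 := abs_le.mp hb2
      have m1 : s₀ ≤ t1 := ht1
      have m2 : s₀ ≤ t2 := ht2
      rw [← hp1, ← hp2, hγ', abs_le]
      constructor <;> linarith
    · obtain ⟨t1, ht1, hp1⟩ := hside h1
      obtain ⟨t2, ht2, hp2⟩ := hside h2
      have hb1 : |t1 - s₀| ≤ d := by
        rw [← hγ' t1 s₀, hγs₀, hp1]; exact hb p1 h1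
      have hb2 : |t2 - s₀| ≤ d := by
        rw [← hγ' t2 s₀, hγs₀, hp2]; exact hb p2 h2
      have a1 := abs_le.mp hb1
      have a2 := abs_le.mp hb2
      have m1 : t1 ≤ s₀ := ht1
      have m2 : t2 ≤ s₀ := ht2
      rw [← hp1, ← hp2, hγ', abs_le]
      constructor <;> linarith
end

section
/- Let K be a C¹-smooth convex body in the hyperbolic plane ℍ. Then the normal field of K covers the interior of K: for every point p in the interior of K there exist a frontier point x of K and a geodesic line Γ with p ∈ Γ such that Γ is normal to K at x. -/
open scoped UpperHalfPlane
open Set Metric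

noncomputable section NormalFieldAux

open Real

namespace NormalFieldAux

/-- cosh of hyperbolic distance in terms of coordinates. -/
lemma cosh_dist'' (z w : ℍ) : Real.cosh (dist z w) =
    ((z.re - w.re) ^ 2 + (z.im - w.im) ^ 2 + 2 * z.im * w.im) / (2 * z.im * w.im) := by
  have hz := z.im_pos
  have hw := w.im_pos
  have h2 : dist (z : ℂ) (w : ℂ) ^ 2 = (z.re - w.re) ^ 2 + (z.im - w.im) ^ 2 := by
    rw [Complex.dist_eq_re_im, Real.sq_sqrt (by positivity)]
    simp [UpperHalfPlane.coe_re, UpperHalfPlane.coe_im]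
  rw [UpperHalfPlane.cosh_dist, h2]
  field_simp
  ring

/-- A geodesic parametrization with a good distance formula to every point. -/
def Nice (γ : ℝ → ℍ) : Prop :=
  IsGeodesicParam γ ∧ ∀ k : ℍ, ∃ A B : ℝ, 0 < A ∧ 1 ≤ A ^ 2 - B ^ 2 ∧
    ∀ u : ℝ, Real.cosh (dist k (γ u)) = A * Real.cosh u - B * Real.sinh u

lemma dist_eq_abs_of_cosh {d e : ℝ} (hd : 0 ≤ d) (h : Real.cosh d = Real.cosh e) : d = |e| := by
  have h1 := Real.cosh_le_cosh.mp h.le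
  have h2 := Real.cosh_le_cosh.mp h.ge
  rw [abs_of_nonneg hd] at h1 h2
  exact le_antisymm h1 h2

def vert (a b : ℝ) (hb : 0 < b) : ℝ → ℍ :=
  fun t => ⟨⟨a, b * Real.exp t⟩, mul_pos hb (Real.exp_pos t)⟩

@[simp] lemma vert_re (a b : ℝ) (hb : 0 < b) (t : ℝ) : (vert a b hb t).re = a := rfl
@[simp] lemma vert_im (a b : ℝ) (hb : 0 < b) (t : ℝ) : (vert a b hb t).im = b * Real.exp t := rfl

def arc (a ρ : ℝ) (hρ : 0 < ρ) : ℝ → ℍ :=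
  fun t => ⟨⟨a + ρ * Real.tanh t, ρ / Real.cosh t⟩, div_pos hρ (Real.cosh_pos _)⟩

@[simp] lemma arc_re (a ρ : ℝ) (hρ : 0 < ρ) (t : ℝ) : (arc a ρ hρ t).re = a + ρ * Real.tanh t := rfl
@[simp] lemma arc_im (a ρ : ℝ) (hρ : 0 < ρ) (t : ℝ) : (arc a ρ hρ t).im = ρ / Real.cosh t := rfl

lemma vert_nice (a b : ℝ) (hb : 0 < b) : Nice (vert a b hb) := by
  constructor
  · intro s t
    have hre : (vert a b hb s).re = (vert a b hb t).re := rfl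
    rw [UpperHalfPlane.dist_of_re_eq hre, Real.dist_eq, vert_im, vert_im,
      Real.log_mul hb.ne' (Real.exp_ne_zero s), Real.log_mul hb.ne' (Real.exp_ne_zero t),
      Real.log_exp, Real.log_exp]
    ring_nf
  · intro k
    have hki := k.im_pos
    refine ⟨((k.re - a) ^ 2 + k.im ^ 2 + b ^ 2) / (2 * k.im * b),
      ((k.re - a) ^ 2 + k.im ^ 2 - b ^ 2) / (2 * k.im * b), ?_, ?_, ?_⟩
    · apply div_pos (by nlinarith [sq_nonneg (k.re - a)]) (by positivity)
    · rw [div_pow, div_pow, div_sub_div_same, le_div_iff₀ (by positivity)]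
      nlinarith [sq_nonneg ((k.re - a) * b), sq_nonneg (k.re - a)]
    · intro u
      rw [cosh_dist'', vert_re, vert_im, Real.cosh_eq, Real.sinh_eq, Real.exp_neg]
      have he := Real.exp_pos u
      field_simp
      ring

lemma arc_nice (a ρ : ℝ) (hρ : 0 < ρ) : Nice (arc a ρ hρ) := by
  have key : ∀ (k : ℍ) (u : ℝ), Real.cosh (dist k (arc a ρ hρ u)) =
      ((ρ ^ 2 + (k.re - a) ^ 2 + k.im ^ 2) / (2 * ρ * k.im)) * Real.cosh u
        - ((k.re - a) / k.im) * Real.sinh u := by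
    intro k u
    have hki := k.im_pos
    have hcu := Real.cosh_pos (x := u)
    rw [cosh_dist'', arc_re, arc_im, Real.tanh_eq_sinh_div_cosh]
    have h1 := Real.cosh_sq_sub_sinh_sq u
    field_simp
    linear_combination (-(ρ ^ 2)) * h1
  constructor
  · intro s t
    have h0 : (0:ℝ) ≤ dist (arc a ρ hρ s) (arc a ρ hρ t) := dist_nonneg
    have hc : Real.cosh (dist (arc a ρ hρ s) (arc a ρ hρ t)) = Real.cosh (s - t) := by
      rw [key (arc a ρ hρ s) t, arc_re, arc_im, Real.cosh_sub]
      have hcs := Real.cosh_pos (x := s)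
      have hs1 := Real.cosh_sq_sub_sinh_sq s
      rw [Real.tanh_eq_sinh_div_cosh]
      field_simp
      linear_combination (-(ρ ^ 2) * Real.cosh t) * hs1
    exact dist_eq_abs_of_cosh h0 hc
  · intro k
    have hki := k.im_pos
    refine ⟨(ρ ^ 2 + (k.re - a) ^ 2 + k.im ^ 2) / (2 * ρ * k.im), (k.re - a) / k.im,
      ?_, ?_, key k⟩
    · apply div_pos (by nlinarith [sq_nonneg (k.re - a)]) (by positivity)
    · have hid : ((ρ ^ 2 + (k.re - a) ^ 2 + k.im ^ 2) / (2 * ρ * k.im)) ^ 2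
          - ((k.re - a) / k.im) ^ 2 - 1
          = (ρ ^ 2 - (k.re - a) ^ 2 - k.im ^ 2) ^ 2 / (2 * ρ * k.im) ^ 2 := by
        field_simp
        ring
      have hnn : 0 ≤ (ρ ^ 2 - (k.re - a) ^ 2 - k.im ^ 2) ^ 2 / (2 * ρ * k.im) ^ 2 :=
        div_nonneg (sq_nonneg _) (sq_nonneg _)
      linarith [hid, hnn]

lemma nice_shift {γ : ℝ → ℍ} (h : Nice γ) (c : ℝ) : Nice (fun t => γ (c + t)) := by
  constructor
  · intro s t
    have := h.1 (c + s) (c + t)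
    simpa using this
  · intro k
    obtain ⟨A, B, hA, hAB, hf⟩ := h.2 k
    refine ⟨A * Real.cosh c - B * Real.sinh c, B * Real.cosh c - A * Real.sinh c, ?_, ?_, ?_⟩
    · have h0 := hf c
      have h1 := Real.one_le_cosh (dist k (γ c))
      nlinarith [h0, h1]
    · have : (A * Real.cosh c - B * Real.sinh c) ^ 2 - (B * Real.cosh c - A * Real.sinh c) ^ 2
          = A ^ 2 - B ^ 2 := by
        linear_combination (A ^ 2 - B ^ 2) * Real.cosh_sq_sub_sinh_sq c
      rw [this]; exact hAB
    · intro u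
      rw [hf (c + u), Real.cosh_add, Real.sinh_add]
      ring

lemma nice_neg {γ : ℝ → ℍ} (h : Nice γ) : Nice (fun t => γ (-t)) := by
  constructor
  · intro s t
    have := h.1 (-s) (-t)
    rw [this]
    rw [abs_sub_comm]
    ring_nf
  · intro k
    obtain ⟨A, B, hA, hAB, hf⟩ := h.2 k
    refine ⟨A, -B, hA, by simpa using hAB, fun u => ?_⟩
    rw [hf (-u), Real.cosh_neg, Real.sinh_neg]
    ring

lemma nice_C {γ : ℝ → ℍ} (h : Nice γ) (k : ℍ) :
    ∃ C t₀ : ℝ, 1 ≤ C ∧ ∀ u, Real.cosh (dist k (γ u)) = C * Real.cosh (u - t₀) := by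
  obtain ⟨A, B, hA, hAB, hf⟩ := h.2 k
  set C := Real.sqrt (A ^ 2 - B ^ 2) with hCdef
  have hC1 : 1 ≤ C := by
    rw [hCdef, show (1:ℝ) = Real.sqrt 1 by simp]
    exact Real.sqrt_le_sqrt hAB
  have hC0 : 0 < C := lt_of_lt_of_le one_pos hC1
  have hC2 : C ^ 2 = A ^ 2 - B ^ 2 := Real.sq_sqrt (by linarith)
  refine ⟨C, Real.arsinh (B / C), hC1, fun u => ?_⟩
  have hsinh : Real.sinh (Real.arsinh (B / C)) = B / C := Real.sinh_arsinh _
  have hcosh : Real.cosh (Real.arsinh (B / C)) = A / C := by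
    rw [Real.cosh_arsinh]
    have h3 : 1 + (B / C) ^ 2 = (A / C) ^ 2 := by
      field_simp
      linarith [hC2]
    rw [h3, Real.sqrt_sq (by positivity)]
  rw [hf u, Real.cosh_sub, hsinh, hcosh]
  field_simp

lemma foot_bound {γ : ℝ → ℍ} (h : Nice γ) (k : ℍ) (t : ℝ)
    (ht : dist k (γ t) ≤ Metric.infDist k (Set.range γ)) : |t| ≤ dist k (γ 0) := by
  obtain ⟨C, t₀, hC1, hf⟩ := nice_C h k
  have hC0 : 0 < C := lt_of_lt_of_le one_pos hC1
  have h1 : dist k (γ t) ≤ dist k (γ t₀) :=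
    ht.trans (Metric.infDist_le_dist_of_mem ⟨t₀, rfl⟩)
  have h2 : Real.cosh (dist k (γ t)) ≤ Real.cosh (dist k (γ t₀)) := by
    rw [Real.cosh_le_cosh, abs_of_nonneg dist_nonneg, abs_of_nonneg dist_nonneg]
    exact h1
  rw [hf t, hf t₀, sub_self, Real.cosh_zero, mul_one] at h2
  have h3 : Real.cosh (t - t₀) ≤ 1 := by nlinarith [h2]
  have h4 : t = t₀ := by
    by_contra hne
    have := Real.one_lt_cosh.mpr (sub_ne_zero.mpr hne)
    linarith
  have h5 : Real.cosh t₀ ≤ Real.cosh (dist k (γ 0)) := by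
    rw [hf 0, zero_sub, Real.cosh_neg]
    nlinarith [Real.cosh_pos (x := t₀)]
  have h6 := Real.cosh_le_cosh.mp h5
  rw [abs_of_nonneg (dist_nonneg)] at h6
  rw [h4]
  exact h6

lemma nice_shift_neg {γ : ℝ → ℍ} (h : Nice γ) (c : ℝ) : Nice (fun t => γ (c + -t)) := by
  constructor
  · intro s t
    have := h.1 (c + -s) (c + -t)
    rw [this, abs_sub_comm]
    ring_nf
  · intro k
    obtain ⟨A, B, hA, hAB, hf⟩ := h.2 k
    refine ⟨A * Real.cosh c - B * Real.sinh c, -(B * Real.cosh c - A * Real.sinh c), ?_, ?_, ?_⟩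
    · have h0 := hf c
      have h1 := Real.one_le_cosh (dist k (γ c))
      nlinarith [h0, h1]
    · have : (A * Real.cosh c - B * Real.sinh c) ^ 2 - (-(B * Real.cosh c - A * Real.sinh c)) ^ 2
          = A ^ 2 - B ^ 2 := by
        linear_combination (A ^ 2 - B ^ 2) * Real.cosh_sq_sub_sinh_sq c
      rw [this]; exact hAB
    · intro u
      rw [hf (c + -u), Real.cosh_add, Real.sinh_add, Real.cosh_neg, Real.sinh_neg]
      ring

/-- Through any two points there is a nice geodesic from the first to the second. -/
lemma exists_geodesic_through (p x : ℍ) :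
    ∃ γ : ℝ → ℍ, Nice γ ∧ γ 0 = p ∧ γ (dist p x) = x := by
  have hstep : ∃ (γ' : ℝ → ℍ) (tp tx : ℝ), Nice γ' ∧ γ' tp = p ∧ γ' tx = x := by
    by_cases hre : p.re = x.re
    · refine ⟨vert p.re p.im p.im_pos, 0, Real.log (x.im / p.im), vert_nice _ _ _, ?_, ?_⟩
      · apply UpperHalfPlane.ext' (by simp) (by simp)
      · apply UpperHalfPlane.ext' (by simp [hre]) ?_
        rw [vert_im, Real.exp_log (div_pos x.im_pos p.im_pos)]
        field_simp
    · set a : ℝ := (x.re ^ 2 + x.im ^ 2 - p.re ^ 2 - p.im ^ 2) / (2 * (x.re - p.re)) with ha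
      have hxp : x.re - p.re ≠ 0 := sub_ne_zero.mpr (Ne.symm hre)
      have hkey : (p.re - a) ^ 2 + p.im ^ 2 = (x.re - a) ^ 2 + x.im ^ 2 := by
        rw [ha]
        field_simp
        ring
      set ρ : ℝ := Real.sqrt ((p.re - a) ^ 2 + p.im ^ 2) with hρdef
      have hρ : 0 < ρ := Real.sqrt_pos.mpr (by nlinarith [sq_nonneg (p.re - a), p.im_pos])
      have hρ2 : ρ ^ 2 = (p.re - a) ^ 2 + p.im ^ 2 := Real.sq_sqrt (by positivity)
      have point_on : ∀ z : ℍ, (z.re - a) ^ 2 + z.im ^ 2 = ρ ^ 2 →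
          arc a ρ hρ (Real.arsinh ((z.re - a) / z.im)) = z := by
        intro z hz
        have hzi := z.im_pos
        have hcosh : Real.cosh (Real.arsinh ((z.re - a) / z.im)) = ρ / z.im := by
          rw [Real.cosh_arsinh]
          have h3 : 1 + ((z.re - a) / z.im) ^ 2 = (ρ / z.im) ^ 2 := by
            field_simp
            linarith [hz]
          rw [h3, Real.sqrt_sq (by positivity)]
        have hsinh := Real.sinh_arsinh ((z.re - a) / z.im)
        apply UpperHalfPlane.ext'
        · rw [arc_re, Real.tanh_eq_sinh_div_cosh, hsinh, hcosh]
          field_simp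
          ring
        · rw [arc_im, hcosh]
          field_simp
      refine ⟨arc a ρ hρ, Real.arsinh ((p.re - a) / p.im), Real.arsinh ((x.re - a) / x.im),
        arc_nice _ _ _, point_on p hρ2.symm, point_on x (by rw [hρ2]; exact hkey.symm)⟩
  obtain ⟨γ', tp, tx, hN, hp, hx⟩ := hstep
  have hd : dist p x = |tx - tp| := by
    rw [← hp, ← hx, hN.1 tp tx, abs_sub_comm]
  rcases le_total tp tx with hle | hle
  · refine ⟨fun t => γ' (tp + t), nice_shift hN tp, ?_, ?_⟩
    · show γ' (tp + 0) = p
      rw [add_zero]; exact hp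
    · show γ' (tp + dist p x) = x
      have h9 : dist p x = tx - tp := by rw [hd, abs_of_nonneg (by linarith)]
      rw [h9, show tp + (tx - tp) = tx by ring]; exact hx
  · refine ⟨fun t => γ' (tp + -t), nice_shift_neg hN tp, ?_, ?_⟩
    · show γ' (tp + -0) = p
      rw [show tp + -0 = tp by ring]; exact hp
    · show γ' (tp + -dist p x) = x
      have h9 : dist p x = tp - tx := by rw [hd, abs_of_nonpos (by linarith)]; ring
      rw [h9, show tp + -(tp - tx) = tx by ring]; exact hx

end NormalFieldAux

end NormalFieldAux
/-- **Lemma.** The normal field of a `C¹`-smooth convex body `K` covers the interior of `K`. -/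
theorem normalField_covers_interior (K : Set ℍ) (hK : IsConvexBody K) (hsm : IsC1Smooth K) :
    ∀ p ∈ interior K, ∃ (x : ℍ) (Γ : Set ℍ),
      IsGeodesicLine Γ ∧ p ∈ Γ ∧ IsNormalAt K Γ x := by
  intro p hp
  obtain ⟨hKc, -, -⟩ := hK
  have hpK : p ∈ K := interior_subset hp
  obtain ⟨ε, hε, hball⟩ := Metric.mem_nhds_iff.mp (mem_interior_iff_mem_nhds.mp hp)
  -- a point of `K` at positive distance from `p`
  obtain ⟨γv, hγv, hv0, -⟩ := NormalFieldAux.exists_geodesic_through p p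
  set q : ℍ := γv (ε / 2) with hq
  have hdq : dist p q = ε / 2 := by
    rw [hq, ← hv0, hγv.1 0 (ε / 2), zero_sub, abs_neg, abs_of_nonneg (by linarith)]
  have hqK : q ∈ K := hball (by rw [Metric.mem_ball, dist_comm, hdq]; linarith)
  -- a farthest point of `K` from `p`
  obtain ⟨x, hxK, hmax'⟩ := hKc.exists_isMaxOn ⟨p, hpK⟩
    ((continuous_const.dist continuous_id).continuousOn)
  have hmax : ∀ k ∈ K, dist p k ≤ dist p x := fun k hk => isMaxOn_iff.mp hmax' k hk
  set R := dist p x with hR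
  have hRq : dist p q ≤ R := hmax q hqK
  have hRpos : 0 < R := by rw [hdq] at hRq; linarith
  obtain ⟨δ, hδ, hδ0, hδR⟩ := NormalFieldAux.exists_geodesic_through p x
  rw [← hR] at hδR
  have hxint : x ∉ interior K := by
    intro hxint
    obtain ⟨ε', hε', hball'⟩ := Metric.mem_nhds_iff.mp (mem_interior_iff_mem_nhds.mp hxint)
    have hdy : dist (δ (R + ε' / 2)) x = ε' / 2 := by
      rw [← hδR, hδ.1 (R + ε' / 2) R]
      rw [show R + ε' / 2 - R = ε' / 2 by ring, abs_of_nonneg (by linarith)]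
    have hyK : δ (R + ε' / 2) ∈ K := hball' (by rw [Metric.mem_ball, hdy]; linarith)
    have h1 := hmax _ hyK
    have h2 : dist p (δ (R + ε' / 2)) = R + ε' / 2 := by
      rw [← hδ0, hδ.1 0 (R + ε' / 2), zero_sub, abs_neg, abs_of_nonneg (by linarith)]
    linarith
  have hxfr : x ∈ frontier K := ⟨subset_closure hxK, hxint⟩
  refine ⟨x, Set.range δ, ⟨δ, hδ.1, rfl⟩, ⟨0, hδ0⟩, hxfr, δ, hδ.1, rfl, R, hδR, Or.inr ?_⟩
  rintro q' ⟨⟨t, rfl⟩, k, hkK, hdist⟩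
  have hb := NormalFieldAux.foot_bound hδ k t (le_of_eq hdist)
  have hk : dist k (δ 0) ≤ R := by rw [hδ0, dist_comm]; exact hmax k hkK
  exact ⟨t, Set.mem_Iic.mpr ((le_abs_self t).trans (hb.trans hk)), rfl⟩
end
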